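/- arXiv:0709.2393 — 7 statements merged into one kernel-verified Lean document; each statement's English description precedes it below -/
import Mathlib

section
/- Let d ≥ 1, let a', c ∈ ℤ^d with c ≠ 0, let t be a real number with t ≥ 0, and let Λ be a real number with Λ > 1. Set a = a' + tc ∈ ℝ^d. If |a| ≥ Λ(|a'| + |c|)|c|, then | |a|/|c| − t | ≤ t/(Λ−1) and | ⟨a,c⟩/|c|² − t | ≤ t/(Λ−1). -/
open scoped RealInnerProductSpace

/-- The lattice point `a ∈ ℤ^d` viewed as a vector in Euclidean space `ℝ^d`. -/
noncomputable def latt {d : ℕ} (a : Fin d → ℤ) : EuclideanSpace ℝ (Fin d) :=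
  WithLp.toLp 2 (fun i => (a i : ℝ))

lemma latt_norm_ge_one {d : ℕ} (c : Fin d → ℤ) (hc : c ≠ 0) : 1 ≤ ‖latt c‖ := by
  obtain ⟨i, hi⟩ : ∃ i, c i ≠ 0 := by
    by_contra hh
    push_neg at hh
    exact hc (funext hh)
  have h1 : (1 : ℝ) ≤ |(c i : ℝ)| := by
    rw [← Int.cast_abs]
    exact_mod_cast Int.one_le_abs hi
  calc (1 : ℝ) ≤ |(c i : ℝ)| := h1
    _ = ‖(latt c) i‖ := by simp [latt]
    _ ≤ ‖latt c‖ := by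
        have := EuclideanSpace.norm_eq (latt c)
        rw [this]
        have : ‖(latt c) i‖ ^ 2 ≤ ∑ j, ‖(latt c) j‖ ^ 2 :=
          Finset.single_le_sum (f := fun j => ‖(latt c) j‖ ^ 2)
            (fun j _ => by positivity) (Finset.mem_univ i)
        calc ‖(latt c) i‖ = Real.sqrt (‖(latt c) i‖ ^ 2) := by
              rw [Real.sqrt_sq (norm_nonneg _)]
          _ ≤ _ := Real.sqrt_le_sqrt this

/-- Lemma 2.1(iii): let `a = a' + tc` with `t ≥ 0`, `Λ > 1`.
If `|a| ≥ Λ(|a'| + |c|)|c|` then `| |a|/|c| − t | ≤ t/(Λ−1)` and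
`| ⟨a,c⟩/|c|² − t | ≤ t/(Λ−1)`. -/
theorem stmt_2 {d : ℕ} (hd : 1 ≤ d) (a' c : Fin d → ℤ) (hc : c ≠ 0)
    (t : ℝ) (ht : 0 ≤ t) (Λ : ℝ) (hΛ : 1 < Λ)
    (a : EuclideanSpace ℝ (Fin d)) (ha : a = latt a' + t • latt c)
    (h : Λ * (‖latt a'‖ + ‖latt c‖) * ‖latt c‖ ≤ ‖a‖) :
    |‖a‖ / ‖latt c‖ - t| ≤ t / (Λ - 1) ∧
    |(⟪a, latt c⟫ : ℝ) / ‖latt c‖ ^ 2 - t| ≤ t / (Λ - 1) := by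
  set nc := ‖latt c‖ with hnc
  set na := ‖latt a'‖ with hna
  have hc1 : 1 ≤ nc := latt_norm_ge_one c hc
  have hc0 : 0 < nc := lt_of_lt_of_le one_pos hc1
  have hna0 : 0 ≤ na := norm_nonneg _
  have hle : ‖a‖ ≤ na + t * nc := by
    rw [ha]
    calc ‖latt a' + t • latt c‖ ≤ ‖latt a'‖ + ‖t • latt c‖ := norm_add_le _ _
      _ = na + t * nc := by rw [norm_smul, Real.norm_of_nonneg ht]
  have hge : t * nc - na ≤ ‖a‖ := by
    have h1 : ‖t • latt c‖ ≤ ‖latt a' + t • latt c‖ + ‖latt a'‖ := by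
      have := norm_sub_norm_le (t • latt c) (latt a' + t • latt c)
      have h2 : t • latt c - (latt a' + t • latt c) = -(latt a') := by abel
      rw [h2, norm_neg] at this
      linarith
    rw [ha]
    rw [norm_smul, Real.norm_of_nonneg ht] at h1
    linarith
  -- key bound: na ≤ t / (Λ - 1)
  have hΛ1 : 0 < Λ - 1 := by linarith
  have hkey : na * (Λ - 1) ≤ t := by
    have h2 : Λ * (na + nc) * nc ≤ na + t * nc := le_trans h hle
    have hnanc : na ≤ na * nc := le_mul_of_one_le_right hna0 hc1
    nlinarith [mul_pos hc0 hc0, hΛ.le]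
  have hkey' : na ≤ t / (Λ - 1) := (le_div_iff₀ hΛ1).mpr hkey
  have hfrac : na / nc ≤ na := by
    apply div_le_self hna0 hc1
  constructor
  · have : |‖a‖ / nc - t| = |‖a‖ - t * nc| / nc := by
      rw [← abs_of_pos hc0, ← abs_div]
      congr 1
      rw [abs_of_pos hc0]
      field_simp
    rw [this]
    have habs : |‖a‖ - t * nc| ≤ na := by
      rw [abs_le]; constructor <;> linarith
    calc |‖a‖ - t * nc| / nc ≤ na / nc := by
          gcongr
      _ ≤ na := hfrac
      _ ≤ t / (Λ - 1) := hkey'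
  · have hinner : (⟪a, latt c⟫ : ℝ) = ⟪latt a', latt c⟫ + t * nc ^ 2 := by
      rw [ha, inner_add_left, real_inner_smul_left, real_inner_self_eq_norm_sq]
    have : (⟪a, latt c⟫ : ℝ) / nc ^ 2 - t = ⟪latt a', latt c⟫ / nc ^ 2 := by
      rw [hinner]
      field_simp
      ring
    rw [this, abs_div, abs_of_pos (by positivity : (0:ℝ) < nc ^ 2)]
    have hcs : |(⟪latt a', latt c⟫ : ℝ)| ≤ na * nc := abs_real_inner_le_norm _ _
    calc |(⟪latt a', latt c⟫ : ℝ)| / nc ^ 2 ≤ (na * nc) / nc ^ 2 := by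
          gcongr
      _ = na / nc := by field_simp
      _ ≤ na := hfrac
      _ ≤ t / (Λ - 1) := hkey'
end

section
/- Let d ≥ 1, let c ∈ ℤ^d with c ≠ 0, let Λ be a real number with Λ ≥ 3, and suppose (a,b) ∈ D_Λ^+(c). Then there exists a real number t with t ≥ Λ|c| such that each of the four quantities |a|/|c|, |b|/|c|, ⟨a,c⟩/|c|², ⟨b,c⟩/|c|² lies in the interval [t/2, 3t/2]; in particular each of them is at least Λ|c|/2. -/
open scoped RealInnerProductSpace

/-- The Lipschitz domain `D_Λ^+(c)`: the pair `(a, b)` belongs to it iff there are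
`a', b' ∈ ℤ^d` and a real `t ≥ 0` with `a = a' + tc`, `b = b' + tc`,
`|a| ≥ Λ(|a'| + |c|)|c|`, `|b| ≥ Λ(|b'| + |c|)|c|`, and
`|a|/|c| ≥ 2Λ²`, `|b|/|c| ≥ 2Λ²`. -/
def LipDom {d : ℕ} (Λ : ℝ) (c a b : Fin d → ℤ) : Prop :=
  ∃ (a' b' : Fin d → ℤ) (t : ℝ), 0 ≤ t ∧
    latt a = latt a' + t • latt c ∧
    latt b = latt b' + t • latt c ∧
    Λ * (‖latt a'‖ + ‖latt c‖) * ‖latt c‖ ≤ ‖latt a‖ ∧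
    Λ * (‖latt b'‖ + ‖latt c‖) * ‖latt c‖ ≤ ‖latt b‖ ∧
    2 * Λ ^ 2 ≤ ‖latt a‖ / ‖latt c‖ ∧
    2 * Λ ^ 2 ≤ ‖latt b‖ / ‖latt c‖

lemma one_le_norm_latt {d : ℕ} {c : Fin d → ℤ} (hc : c ≠ 0) : 1 ≤ ‖latt c‖ := by
  obtain ⟨i, hi⟩ := Function.ne_iff.mp hc
  have h1 : (1 : ℝ) ≤ ‖latt c i‖ ^ 2 := by
    have : (1 : ℝ) ≤ |(c i : ℝ)| := by
      rw [← Int.cast_abs]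
      exact_mod_cast Int.one_le_abs hi
    have h2 : (1:ℝ) ≤ |(c i : ℝ)| ^ 2 := by nlinarith [abs_nonneg ((c i : ℝ))]
    simpa [latt, sq_abs] using h2
  have hsum : (1 : ℝ) ≤ ∑ j, ‖latt c j‖ ^ 2 := by
    calc (1:ℝ) ≤ ‖latt c i‖ ^ 2 := h1
    _ ≤ ∑ j, ‖latt c j‖ ^ 2 :=
      Finset.single_le_sum (f := fun j => ‖latt c j‖ ^ 2) (fun j _ => sq_nonneg _) (Finset.mem_univ i)
  rw [EuclideanSpace.norm_eq]
  calc (1:ℝ) = Real.sqrt 1 := (Real.sqrt_one).symm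
  _ ≤ _ := Real.sqrt_le_sqrt hsum

/-- Key one-vector lemma. -/
lemma key {d : ℕ} {Λ : ℝ} (hΛ : 3 ≤ Λ) {c a a' : Fin d → ℤ}
    (hc1 : 1 ≤ ‖latt c‖) {t : ℝ} (ht : 0 ≤ t)
    (ha : latt a = latt a' + t • latt c)
    (h3 : Λ * (‖latt a'‖ + ‖latt c‖) * ‖latt c‖ ≤ ‖latt a‖) :
    Λ * ‖latt c‖ ≤ t ∧
    ‖latt a‖ / ‖latt c‖ ∈ Set.Icc (t / 2) (3 * t / 2) ∧
    (⟪latt a, latt c⟫ : ℝ) / ‖latt c‖ ^ 2 ∈ Set.Icc (t / 2) (3 * t / 2) := by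
  set cn := ‖latt c‖ with hcn
  set an := ‖latt a‖ with han
  set a'n := ‖latt a'‖ with ha'n
  have hcpos : 0 < cn := lt_of_lt_of_le one_pos hc1
  have ha'nn : 0 ≤ a'n := norm_nonneg _
  -- triangle inequalities
  have htri1 : an ≤ a'n + t * cn := by
    rw [han, ha]
    calc ‖latt a' + t • latt c‖ ≤ ‖latt a'‖ + ‖t • latt c‖ := norm_add_le _ _
    _ = a'n + t * cn := by rw [norm_smul, Real.norm_eq_abs, abs_of_nonneg ht]
  have htri2 : t * cn - a'n ≤ an := by
    have : ‖t • latt c‖ - ‖latt a'‖ ≤ ‖latt a' + t • latt c‖ := by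
      have h := norm_sub_le (latt a' + t • latt c) (latt a')
      have he : latt a' + t • latt c - latt a' = t • latt c := by abel
      rw [he] at h
      linarith
    rw [han, ha]
    calc t * cn - a'n = ‖t • latt c‖ - ‖latt a'‖ := by
          rw [norm_smul, Real.norm_eq_abs, abs_of_nonneg ht]
    _ ≤ _ := this
  -- Λ*cn*a'n ≤ an  and Λ*cn² ≤ an
  have hkey : Λ * a'n * cn + Λ * cn * cn ≤ an := by nlinarith [h3]
  have h3a'n : 3 * a'n ≤ an := by
    have h4 : 0 ≤ a'n * (Λ * cn - 3) := mul_nonneg ha'nn (by nlinarith)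
    nlinarith [mul_nonneg (mul_nonneg (by linarith : (0:ℝ) ≤ Λ) hcpos.le) hcpos.le]
  -- t ≥ Λ cn
  have htlarge : Λ * cn ≤ t := by
    have h1 : Λ * cn * cn ≤ t * cn := by nlinarith [mul_nonneg ha'nn (by nlinarith : (0:ℝ) ≤ Λ * cn - 1)]
    have := le_of_mul_le_mul_right h1 hcpos
    linarith
  have htpos : 0 < t := lt_of_lt_of_le (by positivity) htlarge
  -- 2 an ≤ 3 t cn  and  3 t cn ≤ 4 an
  have hu1 : 2 * an ≤ 3 * (t * cn) := by linarith
  have hu2 : 3 * (t * cn) ≤ 4 * an := by linarith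
  -- a'n ≤ t*cn/2
  have ha'small : 2 * a'n ≤ t * cn := by nlinarith
  -- inner product
  have hinner : (⟪latt a, latt c⟫ : ℝ) = ⟪latt a', latt c⟫ + t * cn ^ 2 := by
    rw [ha, inner_add_left, real_inner_smul_left, real_inner_self_eq_norm_sq]
  have hcs : |(⟪latt a', latt c⟫ : ℝ)| ≤ a'n * cn := abs_real_inner_le_norm _ _
  have hcs1 : -(a'n * cn) ≤ (⟪latt a', latt c⟫ : ℝ) := neg_le_of_abs_le hcs
  have hcs2 : (⟪latt a', latt c⟫ : ℝ) ≤ a'n * cn := le_of_abs_le hcs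
  refine ⟨htlarge, ⟨?_, ?_⟩, ⟨?_, ?_⟩⟩
  · rw [le_div_iff₀ hcpos]; linarith
  · rw [div_le_iff₀ hcpos]; linarith
  · rw [le_div_iff₀ (by positivity : (0:ℝ) < cn ^ 2), hinner]
    nlinarith
  · rw [div_le_iff₀ (by positivity : (0:ℝ) < cn ^ 2), hinner]
    nlinarith

/-- Corollary 2.2(i): for `(a,b) ∈ D_Λ^+(c)` with `Λ ≥ 3` there is `t ≥ Λ|c|` such that
`|a|/|c|`, `|b|/|c|`, `⟨a,c⟩/|c|²` and `⟨b,c⟩/|c|²` all lie in `[t/2, 3t/2]`;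
in particular each of them is at least `Λ|c|/2`. -/
theorem stmt_4 {d : ℕ} (hd : 1 ≤ d) (c : Fin d → ℤ) (hc : c ≠ 0)
    (Λ : ℝ) (hΛ : 3 ≤ Λ) (a b : Fin d → ℤ) (hab : LipDom Λ c a b) :
    ∃ t : ℝ, Λ * ‖latt c‖ ≤ t ∧
      ‖latt a‖ / ‖latt c‖ ∈ Set.Icc (t / 2) (3 * t / 2) ∧
      ‖latt b‖ / ‖latt c‖ ∈ Set.Icc (t / 2) (3 * t / 2) ∧
      (⟪latt a, latt c⟫ : ℝ) / ‖latt c‖ ^ 2 ∈ Set.Icc (t / 2) (3 * t / 2) ∧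
      (⟪latt b, latt c⟫ : ℝ) / ‖latt c‖ ^ 2 ∈ Set.Icc (t / 2) (3 * t / 2) ∧
      Λ * ‖latt c‖ / 2 ≤ ‖latt a‖ / ‖latt c‖ ∧
      Λ * ‖latt c‖ / 2 ≤ ‖latt b‖ / ‖latt c‖ ∧
      Λ * ‖latt c‖ / 2 ≤ (⟪latt a, latt c⟫ : ℝ) / ‖latt c‖ ^ 2 ∧
      Λ * ‖latt c‖ / 2 ≤ (⟪latt b, latt c⟫ : ℝ) / ‖latt c‖ ^ 2 := by
  obtain ⟨a', b', t, ht, ha, hb, h3a, h3b, -, -⟩ := hab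
  have hc1 := one_le_norm_latt hc
  obtain ⟨hta, ⟨ha1, ha2⟩, ⟨ha3, ha4⟩⟩ := key hΛ hc1 ht ha h3a
  obtain ⟨-, ⟨hb1, hb2⟩, ⟨hb3, hb4⟩⟩ := key hΛ hc1 ht hb h3b
  exact ⟨t, hta, ⟨ha1, ha2⟩, ⟨hb1, hb2⟩, ⟨ha3, ha4⟩, ⟨hb3, hb4⟩,
    le_trans (by linarith) ha1, le_trans (by linarith) hb1,
    le_trans (by linarith) ha3, le_trans (by linarith) hb3⟩
end

section
/- Let d ≥ 2. There exists a constant C > 0, depending only on d, with the following property: for every integer Δ ≥ 1 and every c ∈ ℤ^d, if k is the dimension of the affine span over ℝ of the block [c]_Δ (its rank), then for all a, b ∈ [c]_Δ one has |a − b| ≤ C · Δ^{(k+1)!/2}. -/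
/-- The pre-equivalence relation generating the block decomposition `E_Δ`:
`a ≈ b` iff `|a| = |b|` (equivalently `|a|² = |b|²`) and `|a − b| ≤ Δ`. -/
noncomputable def preRel {d : ℕ} (Δ : ℕ) (a b : Fin d → ℤ) : Prop :=
  ‖latt a‖ = ‖latt b‖ ∧ ‖latt (a - b)‖ ≤ (Δ : ℝ)

namespace Stmt8aux
open Matrix
variable {d : ℕ}

lemma latt_sub (a b : Fin d → ℤ) : latt (a - b) = latt a - latt b := by
  ext i; simp [latt]

lemma inner_eq_of_norm_eq {p q : EuclideanSpace ℝ (Fin d)} (h : ‖p‖ = ‖q‖) :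
    inner ℝ q (p - q) = -(‖p - q‖ ^ 2) / 2 := by
  have hexp : ‖p - q‖ ^ 2 = ‖p‖ ^ 2 - 2 * inner ℝ p q + ‖q‖ ^ 2 := norm_sub_sq_real p q
  have h2 : (inner ℝ q (p - q) : ℝ) = inner ℝ q p - inner ℝ q q := by rw [inner_sub_right]
  rw [h2, real_inner_self_eq_norm_sq, real_inner_comm]
  rw [h] at hexp
  linarith

open Matrix in
lemma cramer_mulVec_symm {ι : Type*} [Fintype ι] [DecidableEq ι]
    (A : Matrix ι ι ℝ) (hA : Aᵀ = A) (c : ι → ℝ) :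
    A.cramer (A *ᵥ c) = A.det • c := by
  have h1 : A *ᵥ c = ∑ j, c j • A j := by
    funext i
    simp only [Matrix.mulVec, dotProduct, Finset.sum_apply, Pi.smul_apply, smul_eq_mul]
    refine Finset.sum_congr rfl fun j _ => ?_
    rw [show A j i = Aᵀ i j from rfl, hA, mul_comm]
  rw [h1, map_sum]
  have h2 : ∀ j, A.cramer (c j • A j) = c j • (Pi.single j A.det : ι → ℝ) := by
    intro j
    rw [LinearMap.map_smul]
    congr 1
    have h := Matrix.cramer_transpose_row_self A j
    rwa [hA] at h
  simp only [h2]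
  funext i
  simp only [Finset.sum_apply, Pi.smul_apply, smul_eq_mul, Pi.single_apply]
  rw [Finset.sum_eq_single i]
  · simp [mul_comm]
  · intro j _ hj; simp [Ne.symm hj]
  · intro h; simp at h

set_option maxHeartbeats 1000000 in
lemma diam_bound (N : ℕ) (S : Set (Fin d → ℤ)) (R B : ℝ) (hB : 1 ≤ B)
    (a : Fin d → ℤ) (ha : a ∈ S) (hnorm : ∀ x ∈ S, ‖latt x‖ = R)
    (hrank : Module.finrank ℝ (vectorSpan ℝ (latt '' S)) ≤ N)
    (hspan : vectorSpan ℝ (latt '' S) =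
      Submodule.span ℝ {u : EuclideanSpace ℝ (Fin d) | ∃ x ∈ S, u = latt x - latt a ∧ ‖u‖ ≤ B}) :
    ∀ x ∈ S, ∀ y ∈ S,
      ‖latt x - latt y‖ ≤ 2 * (Nat.factorial (N+1) : ℝ) * B ^ (N+1) := by
  classical
  set W : Submodule ℝ (EuclideanSpace ℝ (Fin d)) := vectorSpan ℝ (latt '' S) with hW
  set P : EuclideanSpace ℝ (Fin d) := (W.starProjection (latt a) : EuclideanSpace ℝ (Fin d)) with hP
  set w : EuclideanSpace ℝ (Fin d) := -P with hwdef
  have hwW : w ∈ W := neg_mem (W.starProjection_apply_mem (latt a))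
  have hmemW : ∀ x ∈ S, latt x - latt a ∈ W := by
    intro x hx
    have := vsub_mem_vectorSpan ℝ (Set.mem_image_of_mem latt hx) (Set.mem_image_of_mem latt ha)
    simpa [vsub_eq_sub] using this
  have hinner_w : ∀ x ∈ S, (inner ℝ w (latt x - latt a) : ℝ) = ‖latt x - latt a‖^2/2 := by
    intro x hx
    have h0 : (inner ℝ (latt a - P) (latt x - latt a) : ℝ) = 0 :=
      W.starProjection_inner_eq_zero (latt a) _ (hmemW x hx)
    have h1 : (inner ℝ (latt a) (latt x - latt a) : ℝ) = -(‖latt x - latt a‖^2)/2 :=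
      inner_eq_of_norm_eq (by rw [hnorm x hx, hnorm a ha])
    have h2 : (inner ℝ (latt a) (latt x - latt a) : ℝ) - inner ℝ P (latt x - latt a) = 0 := by
      rw [← inner_sub_left]; exact h0
    have h3 : (inner ℝ P (latt x - latt a) : ℝ) = -(‖latt x - latt a‖^2)/2 := by linarith
    rw [hwdef, inner_neg_left, h3]; ring
  have hdist : ∀ x ∈ S, ‖latt x - (latt a + w)‖ = ‖w‖ := by
    intro x hx
    have heq : latt x - (latt a + w) = (latt x - latt a) - w := by abel
    have hsq : ‖latt x - (latt a + w)‖^2 = ‖w‖^2 := by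
      rw [heq, norm_sub_sq_real]
      have h2 : (inner ℝ (latt x - latt a) w : ℝ) = ‖latt x - latt a‖^2/2 := by
        rw [real_inner_comm]; exact hinner_w x hx
      rw [h2]; ring
    have := congrArg Real.sqrt hsq
    rwa [Real.sqrt_sq (norm_nonneg _), Real.sqrt_sq (norm_nonneg _)] at this
  have hwbound : ‖w‖ ≤ (Nat.factorial (N+1) : ℝ) * B ^ (N+1) := by
    obtain ⟨t, htV, htspan, htli⟩ := exists_linearIndependent ℝ
      {u : EuclideanSpace ℝ (Fin d) | ∃ x ∈ S, u = latt x - latt a ∧ ‖u‖ ≤ B}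
    have htW : Submodule.span ℝ t = W := by rw [htspan, ← hspan]
    have htfin : t.Finite := htli.setFinite
    haveI : Fintype t := htfin.fintype
    set n : ℕ := Fintype.card t with hn
    -- the vectors
    set v : t → EuclideanSpace ℝ (Fin d) := fun u => (u : EuclideanSpace ℝ (Fin d)) with hv
    have hvV : ∀ u : t, ∃ x, x ∈ S ∧ v u = latt x - latt a ∧ ‖v u‖ ≤ B := by
      intro u; exact htV u.2
    choose ξ hξS hξeq hξB using hvV
    have hcard : n ≤ N := by
      have hsub : ∀ u : t, v u ∈ W := fun u => htW ▸ Submodule.subset_span u.2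
      have hli' : LinearIndependent ℝ (fun u : t => (⟨v u, hsub u⟩ : W)) := by
        apply LinearIndependent.of_comp W.subtype
        exact htli
      exact le_trans hli'.fintype_card_le_finrank hrank
    have hwspan : w ∈ Submodule.span ℝ (Set.range v) := by
      rw [hv, Subtype.range_coe, htW]; exact hwW
    obtain ⟨c, hc⟩ := (Submodule.mem_span_range_iff_exists_fun ℝ).mp hwspan
    -- Gram matrix
    set G : Matrix t t ℝ := Matrix.of (fun i j => (inner ℝ (v i) (v j) : ℝ)) with hG
    have hGsym : Gᵀ = G := by
      funext i j
      show G j i = G i j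
      simp only [hG, Matrix.of_apply]
      exact real_inner_comm _ _
    have hGbound : ∀ i j, |G i j| ≤ B^2 := by
      intro i j
      have hGij : G i j = (inner ℝ (v i) (v j) : ℝ) := rfl
      rw [hGij]
      calc |(inner ℝ (v i) (v j) : ℝ)| ≤ ‖v i‖ * ‖v j‖ := abs_real_inner_le_norm _ _
        _ ≤ B * B := by
            have h1 := hξB i; have h2 := hξB j
            have := norm_nonneg (v i)
            nlinarith [norm_nonneg (v j)]
        _ = B^2 := by ring
    have hgval : ∀ i : t, (inner ℝ (v i) w : ℝ) = ‖v i‖^2/2 := by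
      intro i
      rw [real_inner_comm, hξeq i]
      rw [hinner_w (ξ i) (hξS i), ← hξeq i]
    have hGc : ∀ j, (G *ᵥ c) j = ‖v j‖^2/2 := by
      intro j
      have h1 : (G *ᵥ c) j = ∑ i, c i * (inner ℝ (v j) (v i) : ℝ) := by
        simp [Matrix.mulVec, dotProduct, hG, mul_comm]
      have h2 : (inner ℝ (v j) w : ℝ) = ∑ i, c i * (inner ℝ (v j) (v i) : ℝ) := by
        rw [← hc, inner_sum]
        exact Finset.sum_congr rfl fun i _ => real_inner_smul_right _ _ _
      rw [h1, ← h2, hgval j]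
    -- integer Gram matrix
    set ζ : t → (Fin d → ℤ) := fun u => ξ u - a with hζ
    have hζeq : ∀ u : t, latt (ζ u) = v u := by
      intro u; rw [hζ]; simp only [latt_sub]; rw [← hξeq u]
    set Gz : Matrix t t ℤ := Matrix.of (fun i j => ∑ s, ζ i s * ζ j s) with hGz
    have hGmap : G = Gz.map (Int.castRingHom ℝ) := by
      funext i j
      have hij : (inner ℝ (v i) (v j) : ℝ) = ∑ s, (ζ i s : ℝ) * (ζ j s : ℝ) := by
        rw [← hζeq i, ← hζeq j, PiLp.inner_apply]
        simp [latt, mul_comm]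
      simp only [hG, Matrix.of_apply, Matrix.map_apply, hGz]
      rw [hij]
      simp
    have hdetcast : G.det = ((Gz.det : ℤ) : ℝ) := by
      rw [hGmap]
      calc (Gz.map (Int.castRingHom ℝ)).det
          = ((Int.castRingHom ℝ).mapMatrix Gz).det := rfl
        _ = (Int.castRingHom ℝ) Gz.det := (RingHom.map_det _ _).symm
        _ = ((Gz.det : ℤ) : ℝ) := rfl
    have hdetne : G.det ≠ 0 := by
      intro h0
      obtain ⟨cc, hcc0, hcc⟩ := Matrix.exists_mulVec_eq_zero_iff.mpr h0
      have hz : ‖∑ i, cc i • v i‖^2 = 0 := by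
        rw [← real_inner_self_eq_norm_sq, sum_inner]
        have : ∀ i : t, (inner ℝ (cc i • v i) (∑ j, cc j • v j) : ℝ)
            = cc i * (G *ᵥ cc) i := by
          intro i
          rw [real_inner_smul_left, inner_sum]
          simp only [real_inner_smul_right]
          congr 1
          simp [Matrix.mulVec, dotProduct, hG, mul_comm]
        rw [Finset.sum_congr rfl (fun i _ => this i), hcc]
        simp
      have hzero : ∑ i, cc i • v i = 0 := by
        have h' := congrArg Real.sqrt hz
        rw [Real.sqrt_sq (norm_nonneg _), Real.sqrt_zero] at h'
        exact norm_eq_zero.mp h'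
      have := Fintype.linearIndependent_iff.mp htli cc hzero
      exact hcc0 (funext this)
    have hdet1 : 1 ≤ |G.det| := by
      rw [hdetcast]
      have : Gz.det ≠ 0 := by
        intro h; rw [h] at hdetcast; push_cast at hdetcast; exact hdetne hdetcast
      have h1 : (1 : ℤ) ≤ |Gz.det| := Int.one_le_abs this
      calc (1:ℝ) = ((1:ℤ):ℝ) := by norm_num
        _ ≤ ((|Gz.det| : ℤ) : ℝ) := by exact_mod_cast h1
        _ = |((Gz.det : ℤ) : ℝ)| := by push_cast; ring
    -- Cramer bound on coefficients
    have hcram := cramer_mulVec_symm G hGsym c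
    have hcb : ∀ i, |c i| ≤ (Nat.factorial n : ℝ) * (B^2)^n := by
      intro i
      have h1 : G.det * c i = G.cramer (G *ᵥ c) i := by
        rw [hcram]; simp
      have h2 : |G.cramer (G *ᵥ c) i| ≤ (Nat.factorial n : ℝ) * (B^2)^n := by
        rw [Matrix.cramer_apply]
        have hentries : ∀ j l, |(Matrix.updateCol G i (G *ᵥ c)) j l| ≤ B^2 := by
          intro j l
          rw [Matrix.updateCol_apply]
          split
          · rw [hGc j]
            have := hξB j
            have h0 : (0:ℝ) ≤ ‖v j‖ := norm_nonneg _
            rw [abs_of_nonneg (by positivity)]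
            nlinarith
          · exact hGbound j l
        have hentries' : ∀ j l, (AbsoluteValue.abs (S := ℝ)) ((Matrix.updateCol G i (G *ᵥ c)) j l) ≤ B^2 :=
          hentries
        have hd := Matrix.det_le hentries'
        simpa [nsmul_eq_mul, hn] using hd
      have h3 : |c i| ≤ |G.det| * |c i| := by
        nlinarith [abs_nonneg (c i)]
      calc |c i| ≤ |G.det| * |c i| := h3
        _ = |G.det * c i| := (abs_mul _ _).symm
        _ = |G.cramer (G *ᵥ c) i| := by rw [h1]
        _ ≤ _ := h2
    -- ‖w‖² bound
    have hwsq : ‖w‖^2 = ∑ i, c i * (‖v i‖^2/2) := by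
      have h1 : ‖w‖^2 = (inner ℝ w w : ℝ) := (real_inner_self_eq_norm_sq w).symm
      rw [h1]
      conv_lhs => rw [← hc]
      rw [sum_inner]
      refine Finset.sum_congr rfl fun i _ => ?_
      rw [real_inner_smul_left, hc, hgval i]
    have hterm : ∀ i : t, c i * (‖v i‖^2/2) ≤ (Nat.factorial n : ℝ) * (B^2)^n * B^2 := by
      intro i
      have h0 : (0:ℝ) ≤ ‖v i‖^2/2 := by positivity
      have h1 : ‖v i‖^2/2 ≤ B^2 := by
        have := hξB i
        have := norm_nonneg (v i)
        nlinarith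
      have hfn : (0:ℝ) ≤ (Nat.factorial n : ℝ) * (B^2)^n := by positivity
      nlinarith [le_abs_self (c i), hcb i, abs_nonneg (c i)]
    have hwsqb : ‖w‖^2 ≤ (n : ℝ) * ((Nat.factorial n : ℝ) * (B^2)^n * B^2) := by
      rw [hwsq]
      calc ∑ i, c i * (‖v i‖^2/2) ≤ ∑ _i : t, (Nat.factorial n : ℝ) * (B^2)^n * B^2 :=
            Finset.sum_le_sum (fun i _ => hterm i)
        _ = (n : ℝ) * ((Nat.factorial n : ℝ) * (B^2)^n * B^2) := by
            rw [Finset.sum_const, Finset.card_univ, nsmul_eq_mul]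
    -- compare with target
    have hX : (0:ℝ) ≤ (Nat.factorial (N+1) : ℝ) * B ^ (N+1) := by positivity
    have hfin : ‖w‖^2 ≤ ((Nat.factorial (N+1) : ℝ) * B ^ (N+1))^2 := by
      have hnat : (n : ℝ) * (Nat.factorial n : ℝ) ≤ ((Nat.factorial (N+1) : ℝ))^2 := by
        have h1 : n ≤ Nat.factorial (N+1) :=
          le_trans (le_trans hcard (Nat.le_succ N)) (Nat.self_le_factorial _)
        have h2 : Nat.factorial n ≤ Nat.factorial (N+1) :=
          Nat.factorial_le (by omega)
        have := Nat.mul_le_mul h1 h2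
        calc (n : ℝ) * (Nat.factorial n : ℝ) = ((n * Nat.factorial n : ℕ) : ℝ) := by push_cast; ring
          _ ≤ ((Nat.factorial (N+1) * Nat.factorial (N+1) : ℕ) : ℝ) := by exact_mod_cast this
          _ = ((Nat.factorial (N+1) : ℝ))^2 := by push_cast; ring
      have hpow : (B^2)^n * B^2 ≤ (B ^ (N+1))^2 := by
        have h1 : (B^2)^n * B^2 = B^(2*n+2) := by
          rw [← pow_mul, ← pow_add]
        have h2 : (B ^ (N+1))^2 = B^(2*N+2) := by
          rw [← pow_mul]; ring_nf
        rw [h1, h2]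
        exact pow_le_pow_right₀ (by linarith) (by omega)
      have hb0 : (0:ℝ) ≤ (B^2)^n * B^2 := by positivity
      have hn0 : (0:ℝ) ≤ (n:ℝ) := by positivity
      calc ‖w‖^2 ≤ (n : ℝ) * ((Nat.factorial n : ℝ) * (B^2)^n * B^2) := hwsqb
        _ = ((n : ℝ) * (Nat.factorial n : ℝ)) * ((B^2)^n * B^2) := by ring
        _ ≤ ((Nat.factorial (N+1) : ℝ))^2 * (B ^ (N+1))^2 := by
            apply mul_le_mul hnat hpow hb0 (by positivity)
        _ = ((Nat.factorial (N+1) : ℝ) * B ^ (N+1))^2 := by ring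
    have := Real.sqrt_le_sqrt hfin
    rwa [Real.sqrt_sq (norm_nonneg _), Real.sqrt_sq hX] at this
  intro x hx y hy
  have hx' := hdist x hx
  have hy' := hdist y hy
  calc ‖latt x - latt y‖
      = ‖(latt x - (latt a + w)) - (latt y - (latt a + w))‖ := by
        congr 1; abel
    _ ≤ ‖latt x - (latt a + w)‖ + ‖latt y - (latt a + w)‖ := norm_sub_le _ _
    _ = 2 * ‖w‖ := by rw [hx', hy']; ring
    _ ≤ 2 * ((Nat.factorial (N+1) : ℝ) * B ^ (N+1)) := by linarith
    _ = 2 * (Nat.factorial (N+1) : ℝ) * B ^ (N+1) := by ring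

lemma latt_inj {a b : Fin d → ℤ} (h : latt a = latt b) : a = b := by
  funext i
  have := congrArg (fun v => v i) h
  simpa [latt] using this

/-- single step relation within a set `S` -/
def stepRel (Δ : ℕ) (S : Set (Fin d → ℤ)) (x y : Fin d → ℤ) : Prop :=
  x ∈ S ∧ y ∈ S ∧ ‖latt x - latt y‖ ≤ (Δ : ℝ)

lemma stepRel_symm (Δ : ℕ) (S : Set (Fin d → ℤ)) : Symmetric (stepRel Δ S) := by
  rintro x y ⟨hx, hy, h⟩
  exact ⟨hy, hx, by rwa [norm_sub_rev]⟩

lemma rank_le_one_bound (Δ : ℕ) (S : Set (Fin d → ℤ)) (R : ℝ)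
    (hnorm : ∀ x ∈ S, ‖latt x‖ = R)
    (hrank : Module.finrank ℝ (vectorSpan ℝ (latt '' S)) ≤ 1)
    (a : Fin d → ℤ) (ha : a ∈ S) :
    ∀ b, Relation.ReflTransGen (stepRel Δ S) a b → ‖latt a - latt b‖ ≤ (Δ : ℝ) := by
  have hmemW : ∀ x ∈ S, latt x - latt a ∈ vectorSpan ℝ (latt '' S) := by
    intro x hx
    have := vsub_mem_vectorSpan ℝ (Set.mem_image_of_mem latt hx) (Set.mem_image_of_mem latt ha)
    simpa [vsub_eq_sub] using this
  have two : ∀ x ∈ S, ∀ y ∈ S, x ≠ a → y ≠ a → latt x = latt y := by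
    intro x hx y hy hxa hya
    set u : EuclideanSpace ℝ (Fin d) := latt x - latt a with hu
    have hune : u ≠ 0 := by
      intro h0
      exact hxa (latt_inj (by rwa [sub_eq_zero] at h0))
    have hspan1 : Submodule.span ℝ {u} ≤ vectorSpan ℝ (latt '' S) := by
      rw [Submodule.span_singleton_le_iff_mem]; exact hmemW x hx
    have hWeq : Submodule.span ℝ {u} = vectorSpan ℝ (latt '' S) := by
      apply Submodule.eq_of_le_of_finrank_le hspan1
      rw [finrank_span_singleton hune]
      exact hrank
    have hyW : latt y - latt a ∈ Submodule.span ℝ {u} := by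
      rw [hWeq]; exact hmemW y hy
    obtain ⟨s, hs⟩ := Submodule.mem_span_singleton.mp hyW
    have hsne : s ≠ 0 := by
      intro h0
      rw [h0, zero_smul] at hs
      exact hya (latt_inj (sub_eq_zero.mp hs.symm))
    have hix : (inner ℝ (latt a) u : ℝ) = -(‖u‖^2)/2 :=
      inner_eq_of_norm_eq (by rw [hnorm x hx, hnorm a ha])
    have hiy : (inner ℝ (latt a) (s • u) : ℝ) = -(‖s • u‖^2)/2 := by
      rw [hs]
      exact inner_eq_of_norm_eq (by rw [hnorm y hy, hnorm a ha])
    rw [real_inner_smul_right, hix, norm_smul, Real.norm_eq_abs, mul_pow, sq_abs] at hiy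
    have hu2 : ‖u‖^2 ≠ 0 := pow_ne_zero _ (norm_ne_zero_iff.mpr hune)
    have h1 : s * ‖u‖^2 = s^2 * ‖u‖^2 := by linarith
    have h2 : s = s^2 := by
      rcases mul_eq_mul_right_iff.mp h1 with h | h
      · exact h
      · exact absurd h hu2
    have h3 : s * (s - 1) = 0 := by linear_combination -h2
    have hs1 : s = 1 := by
      rcases mul_eq_zero.mp h3 with h | h
      · exact absurd h hsne
      · linarith
    rw [hs1, one_smul] at hs
    have hs' : latt y - latt a = latt x - latt a := by rw [← hs]
    exact (sub_left_inj.mp hs').symm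
  intro b hb
  induction hb with
  | refl => simp
  | tail hay hstep ih =>
    rename_i y x
    rcases hstep with ⟨hyS, hxS, hbound⟩
    by_cases hxa : x = a
    · subst hxa; simp
    · by_cases hya : y = a
      · subst hya; exact hbound
      · have hxy := two x hxS y hyS hxa hya
        rw [show latt a - latt x = latt a - latt y from by rw [hxy]]
        exact ih


/-- Exponent sequence: `Ee 0 = 0`, `Ee m = (m+1)!/2` for `m ≥ 1`. -/
def Ee : ℕ → ℕ
  | 0 => 0
  | 1 => 1
  | (m+2) => (m+3) * Ee (m+1)

lemma one_le_Ee {m : ℕ} (hm : 1 ≤ m) : 1 ≤ Ee m := by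
  induction m with
  | zero => omega
  | succ n ih =>
    match n with
    | 0 => simp [Ee]
    | (p+1) =>
      have := ih (by omega)
      have : 1 ≤ Ee (p+1) := this
      calc 1 ≤ (p+3) * Ee (p+1) := by nlinarith
        _ = Ee (p+2) := rfl

lemma two_mul_Ee {m : ℕ} (hm : 1 ≤ m) : 2 * Ee m = Nat.factorial (m + 1) := by
  induction m with
  | zero => omega
  | succ n ih =>
    match n with
    | 0 => simp [Ee, Nat.factorial]
    | (p+1) =>
      have h := ih (by omega)
      show 2 * ((p+3) * Ee (p+1)) = Nat.factorial (p+3)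
      rw [Nat.factorial_succ, ← h]
      ring

lemma Ee_le_half_factorial (m : ℕ) : (Ee m : ℝ) ≤ (Nat.factorial (m + 1) : ℝ) / 2 := by
  match m with
  | 0 => norm_num [Ee, Nat.factorial]
  | (n+1) =>
    have h := two_mul_Ee (m := n+1) (by omega)
    have : (2 : ℝ) * (Ee (n+1) : ℝ) = (Nat.factorial (n+2) : ℝ) := by exact_mod_cast congrArg (Nat.cast : ℕ → ℝ) h
    linarith


set_option maxHeartbeats 1600000 in
theorem key (m : ℕ) : ∃ C : ℝ, 0 < C ∧ ∀ (Δ : ℕ), 1 ≤ Δ → ∀ (S : Set (Fin d → ℤ)) (R : ℝ),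
    (∀ x ∈ S, ‖latt x‖ = R) →
    (∀ x ∈ S, ∀ y ∈ S, Relation.ReflTransGen (stepRel Δ S) x y) →
    Module.finrank ℝ (vectorSpan ℝ (latt '' S)) ≤ m →
    ∀ a ∈ S, ∀ b ∈ S, ‖latt a - latt b‖ ≤ C * (Δ:ℝ) ^ (Ee m) := by
  induction m with
  | zero =>
    refine ⟨1, one_pos, ?_⟩
    intro Δ hΔ S R hnorm hconn hrank a ha b hb
    have hbot : vectorSpan ℝ (latt '' S) = ⊥ :=
      Submodule.finrank_eq_zero.mp (Nat.le_zero.mp hrank)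
    have hmem : latt a - latt b ∈ vectorSpan ℝ (latt '' S) := by
      have := vsub_mem_vectorSpan ℝ (Set.mem_image_of_mem latt ha) (Set.mem_image_of_mem latt hb)
      simpa [vsub_eq_sub] using this
    rw [hbot, Submodule.mem_bot] at hmem
    rw [hmem]
    simp [Ee]
  | succ m ih =>
    match m, ih with
    | 0, _ =>
      refine ⟨1, one_pos, ?_⟩
      intro Δ hΔ S R hnorm hconn hrank a ha b hb
      have h := rank_le_one_bound Δ S R hnorm hrank a ha b (hconn a ha b hb)
      simpa [Ee] using h
    | (p+1), ih =>
      obtain ⟨Cm, hCm, hIH⟩ := ih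
      refine ⟨2 * (Nat.factorial (p+3) : ℝ) * (Cm + 1)^(p+3), by positivity, ?_⟩
      intro Δ hΔ S R hnorm hconn hrank a ha b hb
      have hΔ1 : (1:ℝ) ≤ (Δ:ℝ) := by exact_mod_cast hΔ
      set B : ℝ := Cm * (Δ:ℝ)^(Ee (p+1)) + (Δ:ℝ) with hBdef
      have hB1 : 1 ≤ B := by
        have h0 : (0:ℝ) ≤ Cm * (Δ:ℝ)^(Ee (p+1)) := by positivity
        rw [hBdef]; linarith
      set W : Submodule ℝ (EuclideanSpace ℝ (Fin d)) := vectorSpan ℝ (latt '' S) with hW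
      set Vset : Set (EuclideanSpace ℝ (Fin d)) :=
        {u | ∃ x ∈ S, u = latt x - latt a ∧ ‖u‖ ≤ B} with hVset
      set F : Submodule ℝ (EuclideanSpace ℝ (Fin d)) := Submodule.span ℝ Vset with hF
      have hmemW : ∀ x ∈ S, ∀ y ∈ S, latt x - latt y ∈ W := by
        intro x hx y hy
        have := vsub_mem_vectorSpan ℝ (Set.mem_image_of_mem latt hx) (Set.mem_image_of_mem latt hy)
        simpa [vsub_eq_sub] using this
      have hFW : F ≤ W := by
        rw [hF]
        apply Submodule.span_le.mpr
        rintro u ⟨x, hx, rfl, -⟩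
        exact hmemW x hx a ha
      have hspan : W = F := by
        by_contra hne
        have hlt : F < W := lt_of_le_of_ne hFW (fun h => hne h.symm)
        have hFrank : Module.finrank ℝ F ≤ p+1 := by
          have h1 := Submodule.finrank_lt_finrank_of_lt hlt
          omega
        set T : Set (Fin d → ℤ) := {x | x ∈ S ∧ latt x - latt a ∈ F} with hT
        set T' : Set (Fin d → ℤ) := {x | Relation.ReflTransGen (stepRel Δ T) a x} with hT'
        have haT : a ∈ T := ⟨ha, by rw [sub_self]; exact zero_mem F⟩
        have haT' : a ∈ T' := Relation.ReflTransGen.refl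
        have hT'T : ∀ x ∈ T', x ∈ T := by
          intro x hx
          rcases (Relation.ReflTransGen.cases_tail hx) with h | ⟨c, _, hc⟩
          · rw [h]; exact haT
          · exact hc.2.1
        have hT'S : ∀ x ∈ T', x ∈ S := fun x hx => (hT'T x hx).1
        -- upgrade paths in T to paths in T'
        have hup : ∀ x, Relation.ReflTransGen (stepRel Δ T) a x →
            Relation.ReflTransGen (stepRel Δ T') a x := by
          intro x hx
          induction hx with
          | refl => exact Relation.ReflTransGen.refl
          | tail hay hstep ihh =>
            rename_i yy xx
            have hyyT' : yy ∈ T' := hay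
            have hxxT' : xx ∈ T' := hay.tail hstep
            exact ihh.tail ⟨hyyT', hxxT', hstep.2.2⟩
        -- T' is connected
        have hT'conn : ∀ x ∈ T', ∀ y ∈ T',
            Relation.ReflTransGen (stepRel Δ T') x y := by
          intro x hx y hy
          have h1 := hup x hx
          have h2 := hup y hy
          exact Relation.ReflTransGen.trans
            (by haveI : Std.Symm (stepRel Δ T') := ⟨fun _ _ h => stepRel_symm Δ T' h⟩; exact Std.Symm.symm _ _ h1) h2
        -- rank of T'
        have hT'rank : Module.finrank ℝ (vectorSpan ℝ (latt '' T')) ≤ p+1 := by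
          have hle : vectorSpan ℝ (latt '' T') ≤ F := by
            rw [vectorSpan_def]
            apply Submodule.span_le.mpr
            intro u hu
            rw [Set.mem_vsub] at hu
            obtain ⟨u1, ⟨x, hx, rfl⟩, u2, ⟨y, hy, rfl⟩, rfl⟩ := hu
            have hx' := (hT'T x hx).2
            have hy' := (hT'T y hy).2
            have : latt x -ᵥ latt y = (latt x - latt a) - (latt y - latt a) := by
              rw [vsub_eq_sub]; abel
            rw [this]
            exact sub_mem hx' hy'
          exact le_trans (Submodule.finrank_mono hle) hFrank
        have hT'diam : ∀ x ∈ T', ‖latt a - latt x‖ ≤ Cm * (Δ:ℝ)^(Ee (p+1)) :=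
          fun x hx => hIH Δ hΔ T' R (fun z hz => hnorm z (hT'S z hz)) hT'conn hT'rank
            a haT' x hx
        -- there is a point outside F
        have hz : ∃ z ∈ S, latt z - latt a ∉ F := by
          by_contra h
          push_neg at h
          apply hne
          apply le_antisymm _ hFW
          rw [hW, vectorSpan_def]
          apply Submodule.span_le.mpr
          intro u hu
          rw [Set.mem_vsub] at hu
          obtain ⟨u1, ⟨x, hx, rfl⟩, u2, ⟨y, hy, rfl⟩, rfl⟩ := hu
          have : latt x -ᵥ latt y = (latt x - latt a) - (latt y - latt a) := by
            rw [vsub_eq_sub]; abel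
          rw [this]
          exact sub_mem (h x hx) (h y hy)
        obtain ⟨z, hzS, hzF⟩ := hz
        -- first exit point
        have hwalk : ∀ x, Relation.ReflTransGen (stepRel Δ S) a x →
            x ∈ T' ∨ ∃ y ∈ S, latt y - latt a ∉ F ∧ ‖latt y - latt a‖ ≤ B := by
          intro x hx
          induction hx with
          | refl => exact Or.inl haT'
          | tail hay hstep ihh =>
            rename_i yy xx
            rcases ihh with hyyT' | found
            · by_cases hxF : latt xx - latt a ∈ F
              · left
                have hyyT : yy ∈ T := hT'T yy hyyT'
                have hxxT : xx ∈ T := ⟨hstep.2.1, hxF⟩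
                exact Relation.ReflTransGen.tail hyyT' ⟨hyyT, hxxT, hstep.2.2⟩
              · right
                refine ⟨xx, hstep.2.1, hxF, ?_⟩
                have h1 : ‖latt a - latt yy‖ ≤ Cm * (Δ:ℝ)^(Ee (p+1)) := hT'diam yy hyyT'
                have h2 : ‖latt yy - latt xx‖ ≤ (Δ:ℝ) := hstep.2.2
                have h3 : latt xx - latt a = -(latt yy - latt xx) + -(latt a - latt yy) := by abel
                rw [hBdef, h3]
                calc ‖-(latt yy - latt xx) + -(latt a - latt yy)‖
                    ≤ ‖-(latt yy - latt xx)‖ + ‖-(latt a - latt yy)‖ := norm_add_le _ _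
                  _ = ‖latt yy - latt xx‖ + ‖latt a - latt yy‖ := by rw [norm_neg, norm_neg]
                  _ ≤ Cm * (Δ:ℝ)^(Ee (p+1)) + (Δ:ℝ) := by linarith
            · exact Or.inr found
        rcases hwalk z (hconn a ha z hzS) with hzT' | ⟨y, hyS, hyF, hyB⟩
        · exact hzF ((hT'T z hzT').2)
        · exact hyF (Submodule.subset_span ⟨y, hyS, rfl, hyB⟩)
      -- apply the circumcenter bound
      have hd := diam_bound (p+2) S R B hB1 a ha hnorm hrank (by rw [← hW, hspan, hF])
      have h1 : ‖latt a - latt b‖ ≤ 2 * (Nat.factorial (p+3) : ℝ) * B^(p+3) := by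
        have := hd a ha b hb
        simpa using this
      have hBle : B ≤ (Cm+1) * (Δ:ℝ)^(Ee (p+1)) := by
        have h2 : (Δ:ℝ) ≤ (Δ:ℝ)^(Ee (p+1)) := by
          conv_lhs => rw [← pow_one (Δ:ℝ)]
          exact pow_le_pow_right₀ hΔ1 (one_le_Ee (by omega))
        rw [hBdef]; linarith
      have hBpow : B^(p+3) ≤ ((Cm+1) * (Δ:ℝ)^(Ee (p+1)))^(p+3) :=
        pow_le_pow_left₀ (by linarith) hBle _
      have hexp : ((Δ:ℝ)^(Ee (p+1)))^(p+3) = (Δ:ℝ)^(Ee (p+2)) := by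
        rw [← pow_mul]
        congr 1
        show Ee (p+1) * (p+3) = (p+3) * Ee (p+1)
        ring
      calc ‖latt a - latt b‖ ≤ 2 * (Nat.factorial (p+3) : ℝ) * B^(p+3) := h1
        _ ≤ 2 * (Nat.factorial (p+3) : ℝ) * (((Cm+1) * (Δ:ℝ)^(Ee (p+1)))^(p+3)) := by
            have h0 : (0:ℝ) ≤ 2 * (Nat.factorial (p+3) : ℝ) := by positivity
            nlinarith [hBpow]
        _ = 2 * (Nat.factorial (p+3) : ℝ) * (Cm+1)^(p+3) * (Δ:ℝ)^(Ee (p+2)) := by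
            rw [mul_pow, hexp]; ring

lemma norm_eq_of_eqvGen {Δ : ℕ} {c x : Fin d → ℤ}
    (h : Relation.EqvGen (preRel Δ) c x) : ‖latt c‖ = ‖latt x‖ := by
  induction h with
  | rel _ _ h => exact h.1
  | refl => rfl
  | symm _ _ _ ih => exact ih.symm
  | trans _ _ _ _ _ ih1 ih2 => exact ih1.trans ih2

lemma eqvGen_to_path (Δ : ℕ) (c : Fin d → ℤ) :
    ∀ x y, Relation.EqvGen (preRel Δ) x y →
      Relation.EqvGen (preRel Δ) c x →
      Relation.ReflTransGen (stepRel Δ {z | Relation.EqvGen (preRel Δ) c z}) x y := by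
  intro x y h
  induction h with
  | rel u v huv =>
    intro hu
    refine Relation.ReflTransGen.single ⟨hu, ?_, ?_⟩
    · exact Relation.EqvGen.trans _ _ _ hu (Relation.EqvGen.rel _ _ huv)
    · have := huv.2
      rwa [latt_sub] at this
  | refl u => intro _; exact Relation.ReflTransGen.refl
  | symm u v h ih =>
    intro hv
    have hu : Relation.EqvGen (preRel Δ) c u :=
      Relation.EqvGen.trans _ _ _ hv (Relation.EqvGen.symm _ _ h)
    haveI : Std.Symm (stepRel Δ {z | Relation.EqvGen (preRel Δ) c z}) := ⟨fun _ _ h => stepRel_symm _ _ h⟩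
    exact Std.Symm.symm _ _ (ih hu)
  | trans u v w h1 h2 ih1 ih2 =>
    intro hu
    have hv : Relation.EqvGen (preRel Δ) c v := Relation.EqvGen.trans _ _ _ hu h1
    exact Relation.ReflTransGen.trans (ih1 hu) (ih2 hv)

end Stmt8aux

open Stmt8aux

/-- Proposition 4.1: there is a constant `C > 0` depending only on `d` such that,
for every `Δ ≥ 1` and every `c ∈ ℤ^d`, if `k` is the rank of the block `[c]_Δ`
(the dimension of the affine span over `ℝ` of the block), then the diameter of the
block is at most `C Δ^{(k+1)!/2}`. -/
theorem stmt_8 (d : ℕ) (hd : 2 ≤ d) :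
    ∃ C : ℝ, 0 < C ∧ ∀ Δ : ℕ, 1 ≤ Δ → ∀ c : Fin d → ℤ, ∀ k : ℕ,
      k = Module.finrank ℝ
        (affineSpan ℝ (latt '' {x | Relation.EqvGen (preRel Δ) c x})).direction →
      ∀ a b : Fin d → ℤ, Relation.EqvGen (preRel Δ) c a →
        Relation.EqvGen (preRel Δ) c b →
        ‖latt (a - b)‖ ≤ C * (Δ : ℝ) ^ ((Nat.factorial (k + 1) : ℝ) / 2) := by
  classical
  choose C hCpos hC using fun m => Stmt8aux.key (d := d) m
  have hsumpos : 0 < ∑ m ∈ Finset.range (d+1), C m :=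
    Finset.sum_pos (fun m _ => hCpos m) ⟨0, Finset.mem_range.mpr (by omega)⟩
  refine ⟨∑ m ∈ Finset.range (d+1), C m, hsumpos, ?_⟩
  intro Δ hΔ c k hk a b ha hb
  set S : Set (Fin d → ℤ) := {x | Relation.EqvGen (preRel Δ) c x} with hS
  have hnorm : ∀ x ∈ S, ‖latt x‖ = ‖latt c‖ := fun x hx => (norm_eq_of_eqvGen hx).symm
  have hconn : ∀ x ∈ S, ∀ y ∈ S, Relation.ReflTransGen (stepRel Δ S) x y := by
    intro x hx y hy
    have hxy : Relation.EqvGen (preRel Δ) x y :=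
      Relation.EqvGen.trans _ _ _ (Relation.EqvGen.symm _ _ hx) hy
    exact eqvGen_to_path Δ c x y hxy hx
  have hrank : Module.finrank ℝ (vectorSpan ℝ (latt '' S)) ≤ k := by
    rw [hk, direction_affineSpan]
  have hkd : k ≤ d := by
    rw [hk, direction_affineSpan]
    calc Module.finrank ℝ (vectorSpan ℝ (latt '' S))
        ≤ Module.finrank ℝ (EuclideanSpace ℝ (Fin d)) := Submodule.finrank_le _
      _ = d := finrank_euclideanSpace_fin
  have hble := hC k Δ hΔ S (‖latt c‖) hnorm hconn hrank a ha b hb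
  have hΔ1 : (1:ℝ) ≤ (Δ:ℝ) := by exact_mod_cast hΔ
  have hEe : (Δ:ℝ) ^ (Ee k) ≤ (Δ:ℝ) ^ ((Nat.factorial (k+1) : ℝ)/2) := by
    rw [← Real.rpow_natCast (Δ:ℝ) (Ee k)]
    exact Real.rpow_le_rpow_of_exponent_le hΔ1 (Ee_le_half_factorial k)
  have hCk : C k ≤ ∑ m ∈ Finset.range (d+1), C m :=
    Finset.single_le_sum (fun m _ => le_of_lt (hCpos m)) (Finset.mem_range.mpr (by omega))
  have hpow0 : (0:ℝ) ≤ (Δ:ℝ) ^ (Ee k) := by positivity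
  calc ‖latt (a - b)‖ = ‖latt a - latt b‖ := by rw [latt_sub]
    _ ≤ C k * (Δ:ℝ) ^ (Ee k) := hble
    _ ≤ (∑ m ∈ Finset.range (d+1), C m) * (Δ:ℝ) ^ ((Nat.factorial (k+1) : ℝ)/2) :=
        mul_le_mul hCk hEe hpow0 (le_of_lt hsumpos)
end

section
/- Let d ≥ 2. There exists a constant C > 0, depending only on d, such that for every integer Δ ≥ 1 and all a, b ∈ ℤ^d with a ∼_Δ b, one has |a − b| ≤ C · Δ^{(d+1)!/2}. In other words, the supremum d_Δ of the diameters of all blocks of ∼_Δ is finite and satisfies d_Δ ≤ C · Δ^{(d+1)!/2}. -/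
set_option maxHeartbeats 1000000

open Matrix Finset

namespace Stmt9

variable {d : ℕ}

lemma sum_smul_dot {k : ℕ} (f : Fin k → ℚ) (w : Fin k → (Fin d → ℚ)) (z : Fin d → ℚ) :
    (∑ j, f j • w j) ⬝ᵥ z = ∑ j, f j * (w j ⬝ᵥ z) := by
  simp only [dotProduct, Finset.sum_apply, Pi.smul_apply, smul_eq_mul, Finset.sum_mul,
    Finset.mul_sum]
  rw [Finset.sum_comm]
  apply Finset.sum_congr rfl; intro j _; apply Finset.sum_congr rfl; intro i _; ring

lemma dot_self_nonneg (v : Fin d → ℚ) : 0 ≤ v ⬝ᵥ v :=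
  Finset.sum_nonneg fun i _ => mul_self_nonneg (v i)

lemma dot_abs_le {v w : Fin d → ℚ} {L : ℚ} (hL : 0 ≤ L) (hv : v ⬝ᵥ v ≤ L) (hw : w ⬝ᵥ w ≤ L) :
    |v ⬝ᵥ w| ≤ L := by
  have h := Finset.sum_mul_sq_le_sq_mul_sq Finset.univ v w
  have h2 : (v ⬝ᵥ w) ^ 2 ≤ L ^ 2 := by
    calc (v ⬝ᵥ w) ^ 2 ≤ (∑ i, v i ^ 2) * (∑ i, w i ^ 2) := by
          simpa [dotProduct] using h
    _ ≤ L * L := by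
          apply mul_le_mul
          · simpa [dotProduct, sq] using hv
          · simpa [dotProduct, sq] using hw
          · apply Finset.sum_nonneg; intro i _; positivity
          · exact hL
    _ = L ^ 2 := (sq L).symm
  nlinarith [abs_nonneg (v ⬝ᵥ w), sq_abs (v ⬝ᵥ w)]


lemma dot_sum_smul_eq_mulVec {k : ℕ} (w : Fin k → (Fin d → ℚ)) (v : Fin k → ℚ) (j : Fin k) :
    w j ⬝ᵥ (∑ l, v l • w l) = ((Matrix.of fun j l => w j ⬝ᵥ w l).mulVec v) j := by
  rw [dotProduct_comm, sum_smul_dot]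
  simp only [Matrix.mulVec, Matrix.of_apply, dotProduct]
  apply Finset.sum_congr rfl
  intro l _
  rw [mul_comm]
  congr 1
  exact Finset.sum_congr rfl fun i _ => mul_comm _ _

/-- Existence of a circumcenter-shift `u ∈ span w` with `w j ⬝ (x0+u) = 0` and `u⬝u` small. -/
lemma sphere_center {k : ℕ} (w : Fin k → (Fin d → ℚ)) (hw : LinearIndependent ℚ w)
    (hint : ∀ j l, ∃ z : ℤ, w j ⬝ᵥ w l = (z : ℚ)) {L : ℚ} (hL0 : 0 ≤ L)
    (hL : ∀ j, w j ⬝ᵥ w j ≤ L) (x0 : Fin d → ℚ)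
    (hx0 : ∀ j, 2 * (w j ⬝ᵥ x0) = -(w j ⬝ᵥ w j)) :
    ∃ u ∈ Submodule.span ℚ (Set.range w),
      (∀ j, w j ⬝ᵥ (x0 + u) = 0) ∧ u ⬝ᵥ u ≤ (k * Nat.factorial k : ℕ) * L ^ (k + 1) := by
  classical
  set G : Matrix (Fin k) (Fin k) ℚ := Matrix.of fun j l => w j ⬝ᵥ w l with hG
  -- G has integer entries
  obtain ⟨Gz, hGz⟩ : ∃ Gz : Matrix (Fin k) (Fin k) ℤ, G = Gz.map (Int.cast : ℤ → ℚ) := by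
    refine ⟨Matrix.of fun j l => (hint j l).choose, ?_⟩
    ext j l
    simpa [hG] using (hint j l).choose_spec
  -- det G ≠ 0
  have hdet : G.det ≠ 0 := by
    intro h0
    obtain ⟨v, hv0, hvG⟩ := (Matrix.exists_mulVec_eq_zero_iff).2 h0
    have hzero : (∑ j, v j • w j) = 0 := by
      have hq : (∑ j, v j • w j) ⬝ᵥ (∑ j, v j • w j) = 0 := by
        rw [sum_smul_dot]
        have : ∀ j, w j ⬝ᵥ (∑ l, v l • w l) = (G.mulVec v) j := fun j =>
          dot_sum_smul_eq_mulVec w v j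
        simp only [this, hvG]
        simp
      exact dotProduct_self_eq_zero.mp hq
    have := Fintype.linearIndependent_iff.mp hw v hzero
    exact hv0 (funext this)
  have hdet1 : (1 : ℚ) ≤ |G.det| := by
    have : G.det = ((Gz.det : ℤ) : ℚ) := by
      rw [hGz]
      exact (RingHom.map_det (Int.castRingHom ℚ) Gz).symm
    rw [this]
    have hz : Gz.det ≠ 0 := by
      intro h; rw [this, h] at hdet; simp at hdet
    rw [← Int.cast_abs]
    exact_mod_cast Int.one_le_abs hz
  -- entry bounds
  have hGentry : ∀ j l, |G j l| ≤ L := fun j l =>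
    dot_abs_le hL0 (hL j) (hL l)
  -- RHS vector
  set m : Fin k → ℚ := fun j => (w j ⬝ᵥ w j) / 2 with hm
  have hmbound : ∀ j, |m j| ≤ L := by
    intro j
    have h1 : 0 ≤ w j ⬝ᵥ w j := dot_self_nonneg _
    have h2 := hL j
    rw [hm, abs_div]
    rw [abs_of_nonneg h1]
    simp only [abs_two]
    linarith [div_le_self (by linarith : (0:ℚ) ≤ w j ⬝ᵥ w j) (by norm_num : (1:ℚ) ≤ 2)]
  -- solution α
  set α : Fin k → ℚ := fun j => (G.det)⁻¹ * Matrix.cramer G m j with hα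
  have hGα : G.mulVec α = m := by
    have : α = (G.det)⁻¹ • (Matrix.cramer G m) := rfl
    rw [this, Matrix.mulVec_smul, Matrix.mulVec_cramer, smul_smul, inv_mul_cancel₀ hdet, one_smul]
  have hαbound : ∀ j, |α j| ≤ (Nat.factorial k : ℚ) * L ^ k := by
    intro j
    have hc : |Matrix.cramer G m j| ≤ (Nat.factorial k : ℚ) * L ^ k := by
      rw [Matrix.cramer_apply]
      have := Matrix.det_le (A := G.updateCol j m) (abv := AbsoluteValue.abs)
        (x := L) (fun i l => by
          rw [Matrix.updateCol_apply]
          split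
          · exact hmbound i
          · exact hGentry i l)
      simpa [nsmul_eq_mul] using this
    calc |α j| = |G.det|⁻¹ * |Matrix.cramer G m j| := by rw [hα]; rw [abs_mul, abs_inv]
    _ ≤ 1 * |Matrix.cramer G m j| := by
        apply mul_le_mul_of_nonneg_right _ (abs_nonneg _)
        rw [inv_le_one_iff₀]; right; exact hdet1
    _ = |Matrix.cramer G m j| := one_mul _
    _ ≤ _ := hc
  -- the center shift
  refine ⟨∑ j, α j • w j, Submodule.sum_mem _ fun j _ =>
    Submodule.smul_mem _ _ (Submodule.subset_span ⟨j, rfl⟩), ?_, ?_⟩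
  · intro j
    have h1 : w j ⬝ᵥ (∑ l, α l • w l) = (G.mulVec α) j := dot_sum_smul_eq_mulVec w α j
    rw [dotProduct_add, h1, hGα]
    have := hx0 j
    rw [hm]
    field_simp
    linarith
  · have hexp : (∑ j, α j • w j) ⬝ᵥ (∑ j, α j • w j) = ∑ j, α j * m j := by
      rw [sum_smul_dot]
      apply Finset.sum_congr rfl
      intro j _
      congr 1
      rw [dot_sum_smul_eq_mulVec w α j]
      show (G.mulVec α) j = m j
      rw [hGα]
    rw [hexp]
    calc (∑ j, α j * m j) ≤ ∑ j, |α j| * |m j| := by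
          apply Finset.sum_le_sum
          intro j _
          calc α j * m j ≤ |α j * m j| := le_abs_self _
          _ = |α j| * |m j| := abs_mul _ _
    _ ≤ ∑ _j : Fin k, ((Nat.factorial k : ℚ) * L ^ k) * L := by
          apply Finset.sum_le_sum
          intro j _
          apply mul_le_mul (hαbound j) (hmbound j) (abs_nonneg _)
          positivity
    _ = (k : ℚ) * ((Nat.factorial k : ℚ) * L ^ k * L) := by
          rw [Finset.sum_const]
          simp [nsmul_eq_mul]
    _ = (k * Nat.factorial k : ℕ) * L ^ (k + 1) := by
          push_cast
          ring


lemma dot_sub_sub (a b : Fin d → ℚ) :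
    (a - b) ⬝ᵥ (a - b) = a ⬝ᵥ a - 2 * (a ⬝ᵥ b) + b ⬝ᵥ b := by
  simp only [sub_dotProduct, dotProduct_sub]
  rw [dotProduct_comm b a]
  ring

lemma dot_parallelogram (p q : Fin d → ℚ) :
    (p - q) ⬝ᵥ (p - q) ≤ 2 * (p ⬝ᵥ p) + 2 * (q ⬝ᵥ q) := by
  have hid : (p - q) ⬝ᵥ (p - q) + (p + q) ⬝ᵥ (p + q) = 2 * (p ⬝ᵥ p) + 2 * (q ⬝ᵥ q) := by
    simp only [sub_dotProduct, dotProduct_sub, add_dotProduct, dotProduct_add]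
    rw [dotProduct_comm q p]
    ring
  have := dot_self_nonneg (p + q)
  linarith

/-- All points with the same norm as `x0` whose difference from `x0` lies in `span w`
lie on the sphere around `c = x0 + u`. -/
lemma on_sphere {k : ℕ} (w : Fin k → (Fin d → ℚ)) (x0 u : Fin d → ℚ)
    (hu : u ∈ Submodule.span ℚ (Set.range w))
    (hperp : ∀ j, w j ⬝ᵥ (x0 + u) = 0)
    (y : Fin d → ℚ) (hy : y - x0 ∈ Submodule.span ℚ (Set.range w))
    (hnorm : y ⬝ᵥ y = x0 ⬝ᵥ x0) :
    (y - (x0 + u)) ⬝ᵥ (y - (x0 + u)) = u ⬝ᵥ u := by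
  set c := x0 + u with hc
  have hperp' : ∀ v ∈ Submodule.span ℚ (Set.range w), v ⬝ᵥ c = 0 := by
    intro v hv
    induction hv using Submodule.span_induction with
    | mem z hz => obtain ⟨j, rfl⟩ := hz; exact hperp j
    | zero => simp
    | add a b _ _ ha hb => rw [add_dotProduct, ha, hb, add_zero]
    | smul t a _ ha => rw [smul_dotProduct, ha, smul_zero]
  have hyc : y ⬝ᵥ c = x0 ⬝ᵥ c := by
    have := hperp' _ hy
    rw [sub_dotProduct] at this
    linarith
  rw [dot_sub_sub, hnorm, hyc]
  have hx0c : x0 - c = -u := by rw [hc]; abel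
  have : (x0 - c) ⬝ᵥ (x0 - c) = u ⬝ᵥ u := by
    rw [hx0c, neg_dotProduct, dotProduct_neg, neg_neg]
  rw [dot_sub_sub] at this
  linarith


/-- Cast an integer point to a rational vector. -/
def qc {d : ℕ} (a : Fin d → ℤ) : Fin d → ℚ := fun i => (a i : ℚ)

lemma qc_sub {d : ℕ} (a b : Fin d → ℤ) : qc a - qc b = qc (a - b) := by
  funext i; simp [qc]

lemma qc_dot_int {d : ℕ} (a b : Fin d → ℤ) : ∃ z : ℤ, qc a ⬝ᵥ qc b = (z : ℚ) := by
  refine ⟨∑ i, a i * b i, ?_⟩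
  simp only [qc, dotProduct]
  push_cast
  rfl

lemma norm_diff_eq {d : ℕ} (y y0 : Fin d → ℚ) (h : y ⬝ᵥ y = y0 ⬝ᵥ y0) :
    2 * ((y - y0) ⬝ᵥ y0) = -((y - y0) ⬝ᵥ (y - y0)) := by
  have h1 := dot_sub_sub y y0
  rw [sub_dotProduct]
  rw [h] at h1
  have h2 : y ⬝ᵥ y0 = y0 ⬝ᵥ y := dotProduct_comm _ _
  linarith

/-- Base case: a chain whose difference set has rank at most 1 has diameter at most `Δ`. -/
lemma base_case {d : ℕ} (Δ : ℕ) (n : ℕ) (x : ℕ → Fin d → ℤ)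
    (hnorm : ∀ i, i ≤ n → qc (x i) ⬝ᵥ qc (x i) = qc (x 0) ⬝ᵥ qc (x 0))
    (hstep : ∀ i, i < n →
      (qc (x (i+1)) - qc (x i)) ⬝ᵥ (qc (x (i+1)) - qc (x i)) ≤ (Δ : ℚ) ^ 2)
    (hrank : Module.finrank ℚ
      (Submodule.span ℚ ((fun i => qc (x i) - qc (x 0)) '' Set.Iic n)) ≤ 1) :
    ∀ i, i ≤ n → ∀ j, j ≤ n →
      (qc (x i) - qc (x j)) ⬝ᵥ (qc (x i) - qc (x j)) ≤ (Δ : ℚ) ^ 2 := by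
  classical
  set y : ℕ → Fin d → ℚ := fun i => qc (x i) with hy
  set W := Submodule.span ℚ ((fun i => y i - y 0) '' Set.Iic n) with hW
  have hprin : W.IsPrincipal := (W.finrank_le_one_iff_isPrincipal).mp hrank
  haveI := hprin
  obtain ⟨g, hg⟩ : ∃ g, W = Submodule.span ℚ {g} :=
    ⟨Submodule.IsPrincipal.generator W, (Submodule.IsPrincipal.span_singleton_generator W).symm⟩
  -- the second candidate point
  set τ : ℚ := if hgg : g ⬝ᵥ g = 0 then 0 else (-2 * (g ⬝ᵥ y 0)) / (g ⬝ᵥ g) with hτ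
  have hmem : ∀ i, i ≤ n → y i = y 0 ∨ y i = y 0 + τ • g := by
    intro i hi
    have hvW : y i - y 0 ∈ W := Submodule.subset_span ⟨i, hi, rfl⟩
    rw [hg, Submodule.mem_span_singleton] at hvW
    obtain ⟨t, ht⟩ := hvW
    have hnd := norm_diff_eq (y i) (y 0) (hnorm i hi)
    rw [← ht] at hnd
    rw [smul_dotProduct, smul_dotProduct, dotProduct_smul] at hnd
    simp only [smul_eq_mul] at hnd
    by_cases hgg : g ⬝ᵥ g = 0
    · -- then g = 0
      have hg0 : g = 0 := dotProduct_self_eq_zero.mp hgg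
      left
      have : y i - y 0 = 0 := by rw [← ht, hg0, smul_zero]
      rw [sub_eq_zero] at this; exact this
    · by_cases ht0 : t = 0
      · left
        have : y i - y 0 = 0 := by rw [← ht, ht0, zero_smul]
        rw [sub_eq_zero] at this; exact this
      · right
        have htτ : t = τ := by
          rw [hτ, dif_neg hgg]
          field_simp
          have : t * (2 * (g ⬝ᵥ y 0) + t * (g ⬝ᵥ g)) = 0 := by linarith
          rcases mul_eq_zero.mp this with h | h
          · exact absurd h ht0
          · linarith
        rw [← htτ, ht]
        abel
  -- squared distances take only two values
  have hD : ∀ i, i ≤ n → ∀ j, j ≤ n →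
      (y i - y j) ⬝ᵥ (y i - y j) = 0 ∨
      (y i - y j) ⬝ᵥ (y i - y j) = (τ • g) ⬝ᵥ (τ • g) := by
    intro i hi j hj
    rcases hmem i hi with h1 | h1 <;> rcases hmem j hj with h2 | h2
    · left; rw [h1, h2]; simp
    · right; rw [h1, h2]
      have : y 0 - (y 0 + τ • g) = -(τ • g) := by abel
      rw [this, neg_dotProduct, dotProduct_neg, neg_neg]
    · right; rw [h1, h2]
      have : y 0 + τ • g - y 0 = τ • g := by abel
      rw [this]
    · left; rw [h1, h2]; simp
  by_cases hcon : ∀ i, i < n → y (i + 1) = y i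
  · -- all points equal
    have hall : ∀ i, i ≤ n → y i = y 0 := by
      intro i
      induction i with
      | zero => intro _; rfl
      | succ m ih => intro hm; rw [hcon m (by omega), ih (by omega)]
    intro i hi j hj
    show (y i - y j) ⬝ᵥ (y i - y j) ≤ (Δ : ℚ) ^ 2
    rw [hall i hi, hall j hj]
    simp only [sub_self, zero_dotProduct]
    positivity
  · push_neg at hcon
    obtain ⟨i0, hi0, hne⟩ := hcon
    have hd0 : (y (i0+1) - y i0) ⬝ᵥ (y (i0+1) - y i0) ≠ 0 := by
      rw [Ne, dotProduct_self_eq_zero, sub_eq_zero]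
      exact hne
    have hDle : (τ • g) ⬝ᵥ (τ • g) ≤ (Δ : ℚ) ^ 2 := by
      rcases hD (i0+1) (by omega) i0 (by omega) with h | h
      · exact absurd h hd0
      · rw [← h]; exact hstep i0 hi0
    intro i hi j hj
    show (y i - y j) ⬝ᵥ (y i - y j) ≤ (Δ : ℚ) ^ 2
    rcases hD i hi j hj with h | h
    · rw [h]; positivity
    · rw [h]; exact hDle


/-- Exponent sequence: `E k = (k+1)!/2` for `k ≥ 1`. -/
def E : ℕ → ℕ
  | 0 => 1
  | 1 => 1
  | (k+2) => (k+3) * E (k+1)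

/-- Constant sequence. -/
def B : ℕ → ℕ
  | 0 => 1
  | 1 => 1
  | (k+2) => 4 * (k+2) * Nat.factorial (k+2) * (2 * B (k+1) + 2)^(k+3)

lemma E_succ (m : ℕ) : E (m+2) = (m+3) * E (m+1) := rfl

lemma B_succ (m : ℕ) : B (m+2) = 4 * (m+2) * Nat.factorial (m+2) * (2 * B (m+1) + 2)^(m+3) := rfl

lemma E_pos : ∀ k, 1 ≤ E k
  | 0 => le_refl _
  | 1 => le_refl _
  | (k+2) => by
      rw [E_succ]
      have := E_pos (k+1)
      exact Nat.one_le_iff_ne_zero.mpr (by positivity)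

lemma B_pos : ∀ k, 1 ≤ B k
  | 0 => le_refl _
  | 1 => le_refl _
  | (k+2) => by
      rw [B_succ]
      have h1 : 1 ≤ Nat.factorial (k+2) := Nat.one_le_iff_ne_zero.mpr (Nat.factorial_ne_zero _)
      have h2 : 1 ≤ (2 * B (k+1) + 2)^(k+3) := Nat.one_le_pow _ _ (by omega)
      calc 1 ≤ 4 * (k+2) * 1 * 1 := by omega
      _ ≤ 4 * (k+2) * Nat.factorial (k+2) * (2 * B (k+1) + 2)^(k+3) := by
          apply Nat.mul_le_mul (Nat.mul_le_mul_left _ h1) h2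

lemma E_mono (k : ℕ) : E k ≤ E (k+1) := by
  match k with
  | 0 => exact le_refl _
  | (m+1) =>
    rw [E_succ]
    exact Nat.le_mul_of_pos_left _ (by omega)

lemma B_mono (k : ℕ) : B k ≤ B (k+1) := by
  match k with
  | 0 => exact le_refl _
  | (m+1) =>
    rw [B_succ]
    calc B (m+1) ≤ (2 * B (m+1) + 2)^(m+3) := by
          calc B (m+1) ≤ 2 * B (m+1) + 2 := by omega
          _ ≤ (2 * B (m+1) + 2)^(m+3) := Nat.le_self_pow (by omega) _
    _ ≤ 4 * (m+2) * Nat.factorial (m+2) * (2 * B (m+1) + 2)^(m+3) := by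
        apply Nat.le_mul_of_pos_left
        have := Nat.factorial_pos (m+2)
        positivity

lemma two_E (k : ℕ) (hk : 1 ≤ k) : 2 * E k = Nat.factorial (k+1) := by
  induction k, hk using Nat.le_induction with
  | base => rfl
  | succ k hk ih =>
    obtain ⟨m, rfl⟩ : ∃ m, k = m + 1 := ⟨k - 1, by omega⟩
    rw [E_succ, Nat.factorial_succ]
    have : 2 * ((m+3) * E (m+1)) = (m+3) * (2 * E (m+1)) := by ring
    rw [this, ih]

/-- Main inductive bound: a chain whose difference set has rank at most `k`
has squared diameter at most `B k * Δ^(2 * E k)`. -/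
lemma core {d : ℕ} (k : ℕ) (hk : 1 ≤ k) :
    ∀ (Δ : ℕ), 1 ≤ Δ → ∀ (n : ℕ) (x : ℕ → Fin d → ℤ),
    (∀ i, i ≤ n → qc (x i) ⬝ᵥ qc (x i) = qc (x 0) ⬝ᵥ qc (x 0)) →
    (∀ i, i < n → (qc (x (i+1)) - qc (x i)) ⬝ᵥ (qc (x (i+1)) - qc (x i)) ≤ (Δ:ℚ)^2) →
    Module.finrank ℚ (Submodule.span ℚ ((fun i => qc (x i) - qc (x 0)) '' Set.Iic n)) ≤ k →
    ∀ i, i ≤ n → ∀ j, j ≤ n →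
      (qc (x i) - qc (x j)) ⬝ᵥ (qc (x i) - qc (x j)) ≤ (B k : ℚ) * (Δ:ℚ)^(2 * E k) := by
  induction k, hk using Nat.le_induction with
  | base =>
    intro Δ hΔ n x hnorm hstep hrank i hi j hj
    have := base_case Δ n x hnorm hstep hrank i hi j hj
    calc (qc (x i) - qc (x j)) ⬝ᵥ (qc (x i) - qc (x j)) ≤ (Δ:ℚ)^2 := this
    _ = (B 1 : ℚ) * (Δ:ℚ)^(2 * E 1) := by norm_num [B, E]
  | succ k hk IH =>
    intro Δ hΔ n x hnorm hstep hrank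
    by_cases hr : Module.finrank ℚ
        (Submodule.span ℚ ((fun i => qc (x i) - qc (x 0)) '' Set.Iic n)) ≤ k
    · intro i hi j hj
      refine (IH Δ hΔ n x hnorm hstep hr i hi j hj).trans ?_
      have h1 : (B k : ℚ) ≤ (B (k+1) : ℚ) := by exact_mod_cast B_mono k
      have h2 : (Δ:ℚ)^(2 * E k) ≤ (Δ:ℚ)^(2 * E (k+1)) := by
        apply pow_le_pow_right₀ (by exact_mod_cast hΔ)
        have := E_mono k
        omega
      apply mul_le_mul h1 h2 (by positivity) (by positivity)
    · -- the rank jumps to k+1 at some minimal time t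
      obtain ⟨m, rfl⟩ : ∃ m, k = m + 1 := ⟨k - 1, by omega⟩
      set k := m + 1
      have hrn : k + 1 ≤ Module.finrank ℚ
          (Submodule.span ℚ ((fun i => qc (x i) - qc (x 0)) '' Set.Iic n)) := by omega
      set S : ℕ → Set (Fin d → ℚ) := fun t => (fun i => qc (x i) - qc (x 0)) '' Set.Iic t with hS
      have hex : ∃ t, k + 1 ≤ Module.finrank ℚ (Submodule.span ℚ (S t)) := ⟨n, hrn⟩
      obtain ⟨t, ht, htle, htminall⟩ : ∃ t, (k + 1 ≤ Module.finrank ℚ (Submodule.span ℚ (S t)))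
          ∧ t ≤ n ∧ ∀ s, s < t → Module.finrank ℚ (Submodule.span ℚ (S s)) ≤ k := by
        refine ⟨Nat.find hex, Nat.find_spec hex, Nat.find_min' hex hrn, fun s hs => ?_⟩
        have := Nat.find_min hex hs
        omega
      have ht0 : t ≠ 0 := by
        intro h0
        have hS0 : S 0 = {0} := by
          apply Set.Subset.antisymm
          · rintro v ⟨i, hi, rfl⟩
            simp only [Set.mem_Iic, Nat.le_zero] at hi
            simp [hi]
          · rintro v hv
            simp only [Set.mem_singleton_iff] at hv
            exact ⟨0, by simp, by simp [hv]⟩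
        rw [h0, hS0, Submodule.span_zero_singleton] at ht
        simp [finrank_bot] at ht
      obtain ⟨t0, rfl⟩ : ∃ t0, t = t0 + 1 := ⟨t - 1, by omega⟩
      have ht0n : t0 + 1 ≤ n := htle
      have htmin : Module.finrank ℚ (Submodule.span ℚ (S t0)) ≤ k :=
        htminall t0 (by omega)
      -- apply induction hypothesis to the prefix of the chain
      have hprev := IH Δ hΔ t0 x
        (fun i hi => hnorm i (by omega)) (fun i hi => hstep i (by omega)) htmin
      -- the set of points up to time t has pairwise squared distances ≤ L
      set L : ℚ := (2 * (B k : ℚ) + 2) * (Δ:ℚ)^(2 * E k) with hLdef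
      have hΔpos : (0:ℚ) < (Δ:ℚ) := by exact_mod_cast hΔ
      have hpow_nonneg : (0:ℚ) ≤ (Δ:ℚ)^(2 * E k) := by positivity
      have hL0 : 0 ≤ L := by positivity
      have hΔL : (Δ:ℚ)^2 ≤ (Δ:ℚ)^(2 * E k) := by
        apply pow_le_pow_right₀ (by exact_mod_cast hΔ)
        have := E_pos k
        omega
      have hkey : ∀ i, i ≤ t0 →
          (qc (x (t0+1)) - qc (x i)) ⬝ᵥ (qc (x (t0+1)) - qc (x i)) ≤ L := by
        intro i hi
        have hpar := dot_parallelogram (qc (x (t0+1)) - qc (x t0)) (qc (x i) - qc (x t0))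
        rw [show (qc (x (t0+1)) - qc (x t0)) - (qc (x i) - qc (x t0))
            = qc (x (t0+1)) - qc (x i) from by abel] at hpar
        have h1 := hstep t0 (by omega)
        have h2 := hprev i hi t0 (le_refl _)
        have h3 : (qc (x i) - qc (x t0)) ⬝ᵥ (qc (x i) - qc (x t0)) ≤ (B k : ℚ) * (Δ:ℚ)^(2*E k) := h2
        rw [hLdef]
        nlinarith [hpar, h1, h3, hΔL]
      have hLt : ∀ i, i ≤ t0 + 1 → ∀ j, j ≤ t0 + 1 →
          (qc (x i) - qc (x j)) ⬝ᵥ (qc (x i) - qc (x j)) ≤ L := by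
        intro i hi j hj
        have hBk0 : (0:ℚ) ≤ (B k : ℚ) := by positivity
        rcases Nat.lt_or_ge i (t0+1) with hi' | hi' <;> rcases Nat.lt_or_ge j (t0+1) with hj' | hj'
        · have := hprev i (by omega) j (by omega)
          rw [hLdef]
          nlinarith [this]
        · have hj'' : j = t0 + 1 := by omega
          subst hj''
          rw [show qc (x i) - qc (x (t0+1)) = -(qc (x (t0+1)) - qc (x i)) from by abel,
            neg_dotProduct, dotProduct_neg, neg_neg]
          exact hkey i (by omega)
        · have hi'' : i = t0 + 1 := by omega
          subst hi''
          exact hkey j (by omega)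
        · have hi'' : i = t0 + 1 := by omega
          have hj'' : j = t0 + 1 := by omega
          subst hi''; subst hj''
          simp only [sub_self, zero_dotProduct]
          exact hL0
      -- extract a linearly independent spanning family from S t
      have hspan_le : Submodule.span ℚ (S t0.succ) ≤ Submodule.span ℚ (S n) :=
        Submodule.span_mono (Set.image_mono (Set.Iic_subset_Iic.mpr htle))
      have hfr_le : Module.finrank ℚ (Submodule.span ℚ (S t0.succ))
          ≤ Module.finrank ℚ (Submodule.span ℚ (S n)) := Submodule.finrank_mono hspan_le
      have hft : Module.finrank ℚ (Submodule.span ℚ (S t0.succ)) = k + 1 :=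
        le_antisymm (le_trans hfr_le hrank) ht
      have hspan_eq : Submodule.span ℚ (S t0.succ) = Submodule.span ℚ (S n) :=
        Submodule.eq_of_le_of_finrank_le hspan_le (by rw [hft]; exact hrank)
      obtain ⟨b, hbsub, hbspan, hbind⟩ := exists_linearIndependent ℚ (S t0.succ)
      have hbfin : b.Finite := hbind.setFinite
      haveI := hbfin.fintype
      have hcard' : Fintype.card b = k + 1 := by
        have hfc := finrank_span_set_eq_card hbind
        rw [hbspan, hft] at hfc
        rw [← Set.toFinset_card]
        exact hfc.symm
      set e := Fintype.equivFinOfCardEq hcard' with hedef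
      set w : Fin (k+1) → (Fin d → ℚ) := fun j => ((e.symm j : b) : Fin d → ℚ) with hwdef
      have hwind : LinearIndependent ℚ w := hbind.comp e.symm e.symm.injective
      have hwrange : Set.range w = b := by
        rw [show w = ((↑) : b → (Fin d → ℚ)) ∘ e.symm from rfl, Set.range_comp]
        rw [Equiv.range_eq_univ, Set.image_univ, Subtype.range_coe]
      have hwspan : Submodule.span ℚ (Set.range w) = Submodule.span ℚ (S n) := by
        rw [hwrange, hbspan, hspan_eq]
      have hwmem : ∀ j, ∃ s, s ≤ t0 + 1 ∧ w j = qc (x s) - qc (x 0) := by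
        intro j
        have hmem : w j ∈ S t0.succ := hbsub (e.symm j).2
        obtain ⟨s, hs, hseq⟩ := hmem
        exact ⟨s, hs, hseq.symm⟩
      -- hypotheses of the circumcenter lemma
      have hint : ∀ j l, ∃ z : ℤ, w j ⬝ᵥ w l = (z : ℚ) := by
        intro j l
        obtain ⟨sj, _, hj⟩ := hwmem j
        obtain ⟨sl, _, hl⟩ := hwmem l
        rw [hj, hl, qc_sub, qc_sub]
        exact qc_dot_int _ _
      have hLw : ∀ j, w j ⬝ᵥ w j ≤ L := by
        intro j
        obtain ⟨sj, hsj, hj⟩ := hwmem j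
        rw [hj]
        exact hLt sj hsj 0 (by omega)
      have hx0 : ∀ j, 2 * (w j ⬝ᵥ qc (x 0)) = -(w j ⬝ᵥ w j) := by
        intro j
        obtain ⟨sj, hsj, hj⟩ := hwmem j
        rw [hj]
        exact norm_diff_eq _ _ (hnorm sj (by omega))
      obtain ⟨u, huspan, hperp, hubound⟩ :=
        sphere_center w hwind hint hL0 hLw (qc (x 0)) hx0
      have hsph : ∀ i, i ≤ n →
          (qc (x i) - (qc (x 0) + u)) ⬝ᵥ (qc (x i) - (qc (x 0) + u)) = u ⬝ᵥ u := by
        intro i hi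
        apply on_sphere w (qc (x 0)) u huspan hperp
        · rw [hwspan]
          exact Submodule.subset_span ⟨i, hi, rfl⟩
        · exact hnorm i hi
      intro i hi j hj
      have hpar := dot_parallelogram (qc (x i) - (qc (x 0) + u)) (qc (x j) - (qc (x 0) + u))
      rw [show (qc (x i) - (qc (x 0) + u)) - (qc (x j) - (qc (x 0) + u))
          = qc (x i) - qc (x j) from by abel, hsph i hi, hsph j hj] at hpar
      have hub : u ⬝ᵥ u ≤ ((k+1) * Nat.factorial (k+1) : ℕ) * L ^ (k + 2) := hubound
      have hfin : (4:ℚ) * ((((k+1) * Nat.factorial (k+1) : ℕ)) * L^(k+2))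
          = (B (k+1) : ℚ) * (Δ:ℚ)^(2 * E (k+1)) := by
        have hexp : 2 * E (m+2) = (2 * E (m+1)) * (m+3) := by rw [E_succ]; ring
        show (4:ℚ) * ((((m+2) * Nat.factorial (m+2) : ℕ)) * L^(m+3))
          = (B (m+2) : ℚ) * (Δ:ℚ)^(2 * E (m+2))
        rw [hexp, pow_mul, B_succ, hLdef, mul_pow, ← pow_mul]
        push_cast
        ring
      calc (qc (x i) - qc (x j)) ⬝ᵥ (qc (x i) - qc (x j))
          ≤ 4 * (u ⬝ᵥ u) := by linarith
      _ ≤ 4 * ((((k+1) * Nat.factorial (k+1) : ℕ)) * L^(k+2)) := by linarith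
      _ = (B (k+1) : ℚ) * (Δ:ℚ)^(2 * E (k+1)) := hfin



lemma norm_latt_sq {d : ℕ} (a : Fin d → ℤ) : ‖latt a‖ ^ 2 = ((qc a ⬝ᵥ qc a : ℚ) : ℝ) := by
  rw [EuclideanSpace.norm_eq, Real.sq_sqrt (Finset.sum_nonneg fun i _ => sq_nonneg _)]
  simp only [latt, qc, dotProduct, Real.norm_eq_abs, sq_abs, WithLp.ofLp_toLp]
  push_cast
  apply Finset.sum_congr rfl
  intro i _
  ring

lemma latt_sub_neg {d : ℕ} (a b : Fin d → ℤ) : latt (b - a) = -(latt (a - b)) := by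
  ext i
  show ((b - a) i : ℝ) = -(((a - b) i : ℝ))
  simp only [Pi.sub_apply]
  push_cast
  ring

lemma preRel_symm {d : ℕ} {Δ : ℕ} {a b : Fin d → ℤ} (h : preRel Δ a b) : preRel Δ b a := by
  refine ⟨h.1.symm, ?_⟩
  calc ‖latt (b - a)‖ = ‖latt (a - b)‖ := by rw [latt_sub_neg]; exact norm_neg _
  _ ≤ (Δ : ℝ) := h.2

lemma eqvGen_chain {d : ℕ} (Δ : ℕ) (a b : Fin d → ℤ)
    (h : Relation.EqvGen (preRel Δ) a b) :
    ∃ (n : ℕ) (x : ℕ → Fin d → ℤ), x 0 = a ∧ x n = b ∧ ∀ i, i < n → preRel Δ (x i) (x (i+1)) := by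
  induction h with
  | rel a b hab =>
    refine ⟨1, fun i => if i = 0 then a else b, by simp, by simp, ?_⟩
    intro i hi
    have hi0 : i = 0 := by omega
    subst hi0
    simpa using hab
  | refl a => exact ⟨0, fun _ => a, rfl, rfl, fun i hi => absurd hi (by omega)⟩
  | symm a b h ih =>
    obtain ⟨n, x, h0, hn, hs⟩ := ih
    refine ⟨n, fun i => x (n - i), by simpa using hn, by simpa using h0, ?_⟩
    intro i hi
    have h1 := hs (n - i - 1) (by omega)
    have h2 : n - i - 1 + 1 = n - i := by omega
    rw [h2] at h1
    have h3 : n - (i + 1) = n - i - 1 := by omega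
    simp only [h3]
    exact preRel_symm h1
  | trans a b c h1 h2 ih1 ih2 =>
    obtain ⟨n, x, hx0, hxn, hxs⟩ := ih1
    obtain ⟨m, y, hy0, hym, hys⟩ := ih2
    refine ⟨n + m, fun i => if i ≤ n then x i else y (i - n), ?_, ?_, ?_⟩
    · simpa using hx0
    · by_cases hm : m = 0
      · subst hm
        simp only [Nat.add_zero, le_refl, if_pos]
        rw [hxn, ← hy0]; exact hym
      · have hnm : ¬(n + m ≤ n) := by omega
        show (if n + m ≤ n then x (n + m) else y (n + m - n)) = c
        rw [if_neg hnm]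
        simpa [Nat.add_sub_cancel_left] using hym
    · intro i hi
      show preRel Δ (if i ≤ n then x i else y (i - n))
        (if i + 1 ≤ n then x (i + 1) else y (i + 1 - n))
      rcases Nat.lt_or_ge i n with hin | hin
      · rw [if_pos (le_of_lt hin), if_pos (by omega : i + 1 ≤ n)]
        exact hxs i hin
      · have e1 : ¬(i + 1 ≤ n) := by omega
        rw [if_neg e1]
        by_cases e0 : i = n
        · rw [if_pos (by omega : i ≤ n)]
          have h4 : i + 1 - n = 1 := by omega
          have h5 : x i = y 0 := by rw [e0, hxn, ← hy0]
          rw [h4, h5]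
          exact hys 0 (by omega)
        · have e2 : ¬(i ≤ n) := by omega
          rw [if_neg e2]
          have h3 : i + 1 - n = (i - n) + 1 := by omega
          rw [h3]
          exact hys (i - n) (by omega)

lemma preRel_norm_q {d : ℕ} {Δ : ℕ} {a b : Fin d → ℤ} (h : preRel Δ a b) :
    qc a ⬝ᵥ qc a = qc b ⬝ᵥ qc b := by
  have h1 : ‖latt a‖ ^ 2 = ‖latt b‖ ^ 2 := by rw [h.1]
  rw [norm_latt_sq, norm_latt_sq] at h1
  exact_mod_cast h1

lemma preRel_step_q {d : ℕ} {Δ : ℕ} {a b : Fin d → ℤ} (h : preRel Δ a b) :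
    (qc a - qc b) ⬝ᵥ (qc a - qc b) ≤ (Δ : ℚ) ^ 2 := by
  have h1 : ‖latt (a - b)‖ ^ 2 ≤ (Δ : ℝ) ^ 2 :=
    pow_le_pow_left₀ (norm_nonneg _) h.2 2
  rw [norm_latt_sq, ← qc_sub] at h1
  exact_mod_cast h1


theorem stmt_9' (d : ℕ) (hd : 2 ≤ d) :
    ∃ C : ℝ, 0 < C ∧ ∀ Δ : ℕ, 1 ≤ Δ →
      ∀ a b : Fin d → ℤ, Relation.EqvGen (preRel Δ) a b →
        ‖latt (a - b)‖ ≤ C * (Δ : ℝ) ^ ((Nat.factorial (d + 1) : ℝ) / 2) := by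
  have hBpos : (0:ℝ) < (B d : ℝ) := by
    have := B_pos d
    have : (1:ℝ) ≤ (B d : ℝ) := by exact_mod_cast this
    linarith
  refine ⟨Real.sqrt (B d), Real.sqrt_pos.mpr hBpos, ?_⟩
  intro Δ hΔ a b hab
  obtain ⟨n, x, hx0, hxn, hxs⟩ := eqvGen_chain Δ a b hab
  have hnormQ : ∀ i, i ≤ n → qc (x i) ⬝ᵥ qc (x i) = qc (x 0) ⬝ᵥ qc (x 0) := by
    intro i
    induction i with
    | zero => intro _; rfl
    | succ j ihj =>
      intro hj
      have hpr := preRel_norm_q (hxs j (by omega))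
      exact hpr.symm.trans (ihj (by omega))
  have hstepQ : ∀ i, i < n →
      (qc (x (i+1)) - qc (x i)) ⬝ᵥ (qc (x (i+1)) - qc (x i)) ≤ (Δ:ℚ)^2 := by
    intro i hi
    exact preRel_step_q (preRel_symm (hxs i hi))
  have hd1 : 1 ≤ d := by omega
  have hrank : Module.finrank ℚ
      (Submodule.span ℚ ((fun i => qc (x i) - qc (x 0)) '' Set.Iic n)) ≤ d := by
    have h1 := Submodule.finrank_le
      (Submodule.span ℚ ((fun i => qc (x i) - qc (x 0)) '' Set.Iic n))
    have h2 : Module.finrank ℚ (Fin d → ℚ) = d := Module.finrank_fin_fun ℚ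
    omega
  have hcore := core d hd1 Δ hΔ n x hnormQ hstepQ hrank 0 (Nat.zero_le n) n (le_refl n)
  rw [hx0, hxn] at hcore
  have hq : (qc (a - b)) ⬝ᵥ (qc (a - b)) ≤ (B d : ℚ) * (Δ:ℚ)^(2 * E d) := by
    rw [← qc_sub]; exact hcore
  have hr : ‖latt (a - b)‖^2 ≤ (B d : ℝ) * (Δ:ℝ)^(2 * E d) := by
    rw [norm_latt_sq]
    exact_mod_cast hq
  have hE : ((Nat.factorial (d+1) : ℝ)) / 2 = ((E d : ℕ) : ℝ) := by
    have h2 := two_E d hd1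
    rw [← h2]
    push_cast
    ring
  rw [hE, Real.rpow_natCast]
  have hrhs : (Real.sqrt (B d) * (Δ:ℝ)^(E d))^2 = (B d : ℝ) * (Δ:ℝ)^(2 * E d) := by
    rw [mul_pow, Real.sq_sqrt (le_of_lt hBpos), ← pow_mul, mul_comm (E d) 2]
  have h1 : ‖latt (a-b)‖^2 ≤ (Real.sqrt (B d) * (Δ:ℝ)^(E d))^2 := by rw [hrhs]; exact hr
  calc ‖latt (a-b)‖ = Real.sqrt (‖latt (a-b)‖^2) := (Real.sqrt_sq (norm_nonneg _)).symm
  _ ≤ Real.sqrt ((Real.sqrt (B d) * (Δ:ℝ)^(E d))^2) := Real.sqrt_le_sqrt h1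
  _ = Real.sqrt (B d) * (Δ:ℝ)^(E d) := Real.sqrt_sq (by positivity)

end Stmt9

/-- Uniform block-diameter bound (Section 4): there is `C > 0` depending only on `d`
such that for every `Δ ≥ 1` and all `a ∼_Δ b` one has `|a − b| ≤ C Δ^{(d+1)!/2}`;
i.e. `d_Δ ≤ C Δ^{(d+1)!/2}`. -/
theorem stmt_9 (d : ℕ) (hd : 2 ≤ d) :
    ∃ C : ℝ, 0 < C ∧ ∀ Δ : ℕ, 1 ≤ Δ →
      ∀ a b : Fin d → ℤ, Relation.EqvGen (preRel Δ) a b →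
        ‖latt (a - b)‖ ≤ C * (Δ : ℝ) ^ ((Nat.factorial (d + 1) : ℝ) / 2) := by
  exact Stmt9.stmt_9' d hd
end

section
/- Let d ≥ 2. There exist constants C₁, C₂ > 0, depending only on d, with the following property: for every real Λ ≥ 1 and every a ∈ ℤ^d with |a| ≥ C₁ Λ^{2d−1}, there exist c ∈ ℤ^d with 0 < |c| ≤ C₂ Λ^{d−1}, a point a' ∈ ℤ^d, and a real number t ≥ 0 such that a = a' + tc, |a| ≥ Λ(|a'| + |c|)|c|, and ⟨a,c⟩ ≥ 0. -/
open scoped RealInnerProductSpace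

lemma coord_le_norm {d : ℕ} (v : Fin d → ℤ) (i : Fin d) : |(v i : ℝ)| ≤ ‖latt v‖ := by
  rw [EuclideanSpace.norm_eq]
  have h1 : |(v i : ℝ)| = Real.sqrt (‖latt v i‖ ^ 2) := by
    rw [Real.sqrt_sq_eq_abs]; simp [latt]
  rw [h1]
  apply Real.sqrt_le_sqrt
  exact Finset.single_le_sum (f := fun j => ‖latt v j‖ ^ 2) (fun j _ => sq_nonneg _)
    (Finset.mem_univ i)

lemma norm_latt_le {d : ℕ} (hd : 1 ≤ d) (v : Fin d → ℤ) (M : ℝ)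
    (h : ∀ j, |(v j : ℝ)| ≤ M) : ‖latt v‖ ≤ d * M := by
  have hM : 0 ≤ M := le_trans (abs_nonneg _) (h ⟨0, hd⟩)
  rw [EuclideanSpace.norm_eq]
  have h1 : ∑ j, ‖latt v j‖ ^ 2 ≤ (d : ℝ) * M ^ 2 := by
    calc ∑ j, ‖latt v j‖ ^ 2 ≤ ∑ _j : Fin d, M ^ 2 := by
          apply Finset.sum_le_sum
          intro j _
          have := h j
          have : ‖latt v j‖ ≤ M := by simpa [latt, Real.norm_eq_abs] using h j
          nlinarith [norm_nonneg (latt v j)]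
      _ = (d : ℝ) * M ^ 2 := by simp [Finset.sum_const, mul_comm]
  have h2 : (d : ℝ) * M ^ 2 ≤ ((d : ℝ) * M) ^ 2 := by
    have : (1 : ℝ) ≤ d := by exact_mod_cast hd
    nlinarith
  calc Real.sqrt (∑ j, ‖latt v j‖ ^ 2) ≤ Real.sqrt (((d : ℝ) * M) ^ 2) :=
        Real.sqrt_le_sqrt (le_trans h1 h2)
    _ = (d : ℝ) * M := by
        rw [Real.sqrt_sq (by positivity)]

lemma dirichlet (d N : ℕ) (hN : 0 < N) (x : Fin d → ℝ) (i : Fin d) (hx : x i = 1) :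
    ∃ (q : ℕ) (p : Fin d → ℤ), 0 < q ∧ q ≤ N ^ (d - 1) ∧ p i = (q : ℤ) ∧
      ∀ j, |(q : ℝ) * x j - (p j : ℝ)| ≤ 1 / N := by
  have hN' : (0 : ℝ) < N := by exact_mod_cast hN
  have hFmem : ∀ (k : ℕ) (j : {j : Fin d // j ≠ i}),
      (⌊(N : ℝ) * Int.fract ((k : ℝ) * x j)⌋).toNat < N := by
    intro k j
    have h0 : (0 : ℝ) ≤ (N : ℝ) * Int.fract ((k : ℝ) * x j) :=
      mul_nonneg hN'.le (Int.fract_nonneg _)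
    have h1 : (N : ℝ) * Int.fract ((k : ℝ) * x j) < N := by
      have := Int.fract_lt_one ((k : ℝ) * x j)
      nlinarith
    have h2 : ⌊(N : ℝ) * Int.fract ((k : ℝ) * x j)⌋ < (N : ℤ) :=
      Int.floor_lt.mpr (by exact_mod_cast h1)
    have h3 : 0 ≤ ⌊(N : ℝ) * Int.fract ((k : ℝ) * x j)⌋ := Int.floor_nonneg.mpr h0
    omega
  set F : ℕ → ({j : Fin d // j ≠ i} → Fin N) := fun k j =>
    ⟨(⌊(N : ℝ) * Int.fract ((k : ℝ) * x j)⌋).toNat, hFmem k j⟩ with hF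
  have hcard : (Finset.univ : Finset ({j : Fin d // j ≠ i} → Fin N)).card <
      (Finset.range (N ^ (d - 1) + 1)).card := by
    rw [Finset.card_univ, Fintype.card_fun, Fintype.card_fin, Finset.card_range]
    have : Fintype.card {j : Fin d // j ≠ i} = d - 1 := by
      rw [Fintype.card_subtype_compl, Fintype.card_subtype_eq, Fintype.card_fin]
    rw [this]
    omega
  obtain ⟨k1, hk1, k2, hk2, hne, hFeq⟩ :=
    Finset.exists_ne_map_eq_of_card_lt_of_maps_to (f := F)
      hcard (fun k _ => Finset.mem_univ (F k))
  wlog h12 : k1 < k2 generalizing k1 k2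
  · exact this k2 hk2 k1 hk1 hne.symm hFeq.symm (by omega)
  refine ⟨k2 - k1, fun j => if j = i then ((k2 - k1 : ℕ) : ℤ)
      else ⌊(k2 : ℝ) * x j⌋ - ⌊(k1 : ℝ) * x j⌋, by omega, ?_, by simp, ?_⟩
  · have : k2 < N ^ (d - 1) + 1 := Finset.mem_range.mp hk2
    omega
  intro j
  by_cases hj : j = i
  · subst hj
    simp [hx]
  · simp only [if_neg hj]
    have hfloors : ⌊(N : ℝ) * Int.fract ((k1 : ℝ) * x j)⌋ =
        ⌊(N : ℝ) * Int.fract ((k2 : ℝ) * x j)⌋ := by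
      have h := congrFun hFeq ⟨j, hj⟩
      rw [hF] at h
      simp only [Fin.mk.injEq] at h
      have h3 : 0 ≤ ⌊(N : ℝ) * Int.fract ((k1 : ℝ) * x j)⌋ :=
        Int.floor_nonneg.mpr (mul_nonneg hN'.le (Int.fract_nonneg _))
      have h4 : 0 ≤ ⌊(N : ℝ) * Int.fract ((k2 : ℝ) * x j)⌋ :=
        Int.floor_nonneg.mpr (mul_nonneg hN'.le (Int.fract_nonneg _))
      omega
    have hlt : |(N : ℝ) * Int.fract ((k2 : ℝ) * x j) -
        (N : ℝ) * Int.fract ((k1 : ℝ) * x j)| < 1 := by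
      have l1 := Int.floor_le ((N : ℝ) * Int.fract ((k1 : ℝ) * x j))
      have l2 := Int.lt_floor_add_one ((N : ℝ) * Int.fract ((k1 : ℝ) * x j))
      have l3 := Int.floor_le ((N : ℝ) * Int.fract ((k2 : ℝ) * x j))
      have l4 := Int.lt_floor_add_one ((N : ℝ) * Int.fract ((k2 : ℝ) * x j))
      rw [hfloors] at l1 l2
      rw [abs_lt]
      constructor <;> linarith
    have key : ((k2 - k1 : ℕ) : ℝ) * x j -
        ((⌊(k2 : ℝ) * x j⌋ - ⌊(k1 : ℝ) * x j⌋ : ℤ) : ℝ) =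
        Int.fract ((k2 : ℝ) * x j) - Int.fract ((k1 : ℝ) * x j) := by
      rw [Nat.cast_sub h12.le]
      push_cast
      rw [← Int.self_sub_floor, ← Int.self_sub_floor]
      ring
    rw [key, abs_le]
    rw [abs_lt] at hlt
    have hcancel : (N : ℝ) * (1 / N) = 1 := mul_one_div_cancel hN'.ne'
    constructor
    · nlinarith [hlt.1]
    · nlinarith [hlt.2]

set_option maxHeartbeats 1000000 in
/-- Proposition 4.2: there are constants `C₁, C₂ > 0` depending only on `d` such that
for every `Λ ≥ 1` and every `a ∈ ℤ^d` with `|a| ≥ C₁ Λ^{2d−1}` there are a nonzero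
`c ∈ ℤ^d` with `|c| ≤ C₂ Λ^{d−1}`, a lattice point `a'` and a real `t ≥ 0` with
`a = a' + tc`, `|a| ≥ Λ(|a'| + |c|)|c|` and `⟨a,c⟩ ≥ 0`. -/
theorem stmt_11 (d : ℕ) (hd : 2 ≤ d) :
    ∃ C₁ C₂ : ℝ, 0 < C₁ ∧ 0 < C₂ ∧ ∀ Λ : ℝ, 1 ≤ Λ →
      ∀ a : Fin d → ℤ, C₁ * Λ ^ (2 * d - 1) ≤ ‖latt a‖ →
        ∃ (c a' : Fin d → ℤ) (t : ℝ), c ≠ 0 ∧ ‖latt c‖ ≤ C₂ * Λ ^ (d - 1) ∧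
          0 ≤ t ∧ latt a = latt a' + t • latt c ∧
          Λ * (‖latt a'‖ + ‖latt c‖) * ‖latt c‖ ≤ ‖latt a‖ ∧
          0 ≤ (⟪latt a, latt c⟫ : ℝ) := by
  have hd1 : 1 ≤ d := by omega
  have hdr : (2 : ℝ) ≤ (d : ℝ) := by exact_mod_cast hd
  set dr : ℝ := (d : ℝ) with hdrdef
  have hdpos : (0 : ℝ) < dr := by linarith
  have h5pos : (0 : ℝ) < 5 * dr ^ 2 := by nlinarith
  have hC1pos : (0 : ℝ) < 16 * dr ^ 2 * (5 * dr ^ 2) ^ (2 * d - 2) := by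
    have := pow_pos h5pos (2 * d - 2); nlinarith
  have hC2pos : (0 : ℝ) < 2 * dr * (5 * dr ^ 2) ^ (d - 1) := by
    have := pow_pos h5pos (d - 1); nlinarith
  refine ⟨16 * dr ^ 2 * (5 * dr ^ 2) ^ (2 * d - 2), 2 * dr * (5 * dr ^ 2) ^ (d - 1),
    hC1pos, hC2pos, ?_⟩
  intro Λ hΛ a ha
  have hΛ0 : (0 : ℝ) < Λ := by linarith
  -- the scale N
  set N : ℕ := ⌈4 * dr ^ 2 * Λ⌉₊ with hNdef
  have hNge : 4 * dr ^ 2 * Λ ≤ (N : ℝ) := Nat.le_ceil _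
  have hNle : (N : ℝ) ≤ 5 * dr ^ 2 * Λ := by
    have h1 : (N : ℝ) < 4 * dr ^ 2 * Λ + 1 := Nat.ceil_lt_add_one (by nlinarith)
    nlinarith
  have hNr : (0 : ℝ) < N := by nlinarith
  have hN0 : 0 < N := by exact_mod_cast hNr
  -- the coordinate of maximal absolute value
  obtain ⟨i, -, hi⟩ := Finset.exists_max_image Finset.univ (fun j => (a j).natAbs)
    ⟨⟨0, by omega⟩, Finset.mem_univ _⟩
  set A : ℕ := (a i).natAbs with hAdef
  have hapos : (0 : ℝ) < ‖latt a‖ := lt_of_lt_of_le (by positivity) ha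
  have hA1 : 1 ≤ A := by
    by_contra h
    have hA0 : ∀ j : Fin d, a j = 0 := by
      intro j
      have := hi j (Finset.mem_univ j)
      omega
    have : latt a = 0 := by ext j; simp [latt, hA0 j]
    rw [this, norm_zero] at hapos
    exact lt_irrefl _ hapos
  have hAr : (1 : ℝ) ≤ (A : ℝ) := by exact_mod_cast hA1
  have hA0ne : (A : ℝ) ≠ 0 := by linarith
  have hAabs : (A : ℝ) = |(a i : ℝ)| := by
    rw [hAdef]; push_cast [Nat.cast_natAbs]; rfl
  have habs : ∀ j, |(a j : ℝ)| ≤ (A : ℝ) := by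
    intro j
    have h1 := hi j (Finset.mem_univ j)
    have h2 : ((a j).natAbs : ℝ) ≤ ((a i).natAbs : ℝ) := by exact_mod_cast h1
    rw [Nat.cast_natAbs, Nat.cast_natAbs] at h2
    rw [hAabs]; exact_mod_cast h2
  have hAle : (A : ℝ) ≤ ‖latt a‖ := by rw [hAabs]; exact coord_le_norm a i
  -- the sign
  set s : ℤ := if 0 ≤ a i then 1 else -1 with hs
  have hs1 : s = 1 ∨ s = -1 := by rw [hs]; split_ifs <;> simp
  have hsabs : |(s : ℝ)| = 1 := by rcases hs1 with h | h <;> rw [h] <;> norm_num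
  have hss : (s : ℝ) * (s : ℝ) = 1 := by rcases hs1 with h | h <;> rw [h] <;> norm_num
  have hsA : (s : ℝ) * (a i : ℝ) = (A : ℝ) := by
    rw [hAabs, hs]
    split_ifs with h
    · rw [abs_of_nonneg (by exact_mod_cast h : (0:ℝ) ≤ (a i : ℝ))]; push_cast; ring
    · rw [abs_of_neg (by exact_mod_cast not_le.mp h : (a i : ℝ) < 0)]; push_cast; ring
  set x : Fin d → ℝ := fun j => (s : ℝ) * (a j : ℝ) / (A : ℝ) with hx
  have hxi : x i = 1 := by
    rw [hx]; simp only; rw [hsA, div_self hA0ne]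
  have hax : ∀ j, (a j : ℝ) = (s : ℝ) * (A : ℝ) * x j := by
    intro j
    rw [hx]; simp only
    have h : (s : ℝ) * (A : ℝ) * ((s : ℝ) * (a j : ℝ) / (A : ℝ)) =
        ((s : ℝ) * (s : ℝ)) * ((A : ℝ) / (A : ℝ)) * (a j : ℝ) := by ring
    rw [h, hss, div_self hA0ne, one_mul, one_mul]
  have hxle : ∀ j, |x j| ≤ 1 := by
    intro j
    rw [hx]; simp only
    rw [abs_div, abs_mul, hsabs, one_mul, abs_of_nonneg (by positivity : (0:ℝ) ≤ (A:ℝ)),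
      div_le_one (by linarith)]
    exact habs j
  -- Dirichlet
  obtain ⟨q, p, hq0, hqN, hpi, herr⟩ := dirichlet d N hN0 x i hxi
  have hqr : (1 : ℝ) ≤ (q : ℝ) := by exact_mod_cast hq0
  have hqr0 : (0 : ℝ) < (q : ℝ) := by linarith
  have hqNr : (q : ℝ) ≤ (N : ℝ) ^ (d - 1) := by exact_mod_cast hqN
  set c : Fin d → ℤ := fun j => s * p j with hc
  have hkey : ∀ j, |(A : ℝ) * (c j : ℝ) - (q : ℝ) * (a j : ℝ)| ≤ (A : ℝ) / N := by
    intro j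
    have heq : (A : ℝ) * (c j : ℝ) - (q : ℝ) * (a j : ℝ) =
        -((s : ℝ) * (A : ℝ)) * ((q : ℝ) * x j - (p j : ℝ)) := by
      rw [hax j, hc]; push_cast; ring
    rw [heq, abs_mul, abs_neg, abs_mul, hsabs, one_mul,
      abs_of_nonneg (by positivity : (0:ℝ) ≤ (A:ℝ))]
    calc (A : ℝ) * |(q : ℝ) * x j - (p j : ℝ)| ≤ (A : ℝ) * (1 / N) :=
          mul_le_mul_of_nonneg_left (herr j) (by positivity)
      _ = (A : ℝ) / N := by ring
  have hcle : ∀ j, |(c j : ℝ)| ≤ 2 * (q : ℝ) := by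
    intro j
    have h1 : |(c j : ℝ)| = |(p j : ℝ)| := by
      rw [hc]; push_cast; rw [abs_mul, hsabs, one_mul]
    have h2 : |(p j : ℝ)| ≤ |(q : ℝ) * x j - (p j : ℝ)| + |(q : ℝ) * x j| := by
      calc |(p j : ℝ)| = |((p j : ℝ) - (q : ℝ) * x j) + (q : ℝ) * x j| := by ring_nf
        _ ≤ |(p j : ℝ) - (q : ℝ) * x j| + |(q : ℝ) * x j| := abs_add_le _ _
        _ = |(q : ℝ) * x j - (p j : ℝ)| + |(q : ℝ) * x j| := by rw [abs_sub_comm]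
    have h3 : |(q : ℝ) * x j| ≤ (q : ℝ) := by
      rw [abs_mul, abs_of_nonneg (by positivity : (0:ℝ) ≤ (q:ℝ))]
      calc (q : ℝ) * |x j| ≤ (q : ℝ) * 1 := mul_le_mul_of_nonneg_left (hxle j) (by positivity)
        _ = (q : ℝ) := mul_one _
    have h4 : |(q : ℝ) * x j - (p j : ℝ)| ≤ 1 := by
      calc |(q : ℝ) * x j - (p j : ℝ)| ≤ 1 / N := herr j
        _ ≤ 1 := by
            rw [div_le_one hNr]
            exact_mod_cast hN0
    rw [h1]; linarith
  have hcnorm : ‖latt c‖ ≤ dr * (2 * (q : ℝ)) := norm_latt_le hd1 c _ hcle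
  have hcnz : c ≠ 0 := by
    intro h
    have h1 : c i = 0 := by rw [h]; rfl
    rw [hc] at h1
    simp only at h1
    rw [hpi] at h1
    rcases hs1 with h2 | h2 <;> rw [h2] at h1 <;> omega
  -- the integer translation length
  set T : ℕ := A / q with hT
  have hTb1 : q * T ≤ A := by rw [hT]; exact Nat.mul_div_le A q
  have hTb2 : A < q * T + q := by
    have h0 : A / q < T + 1 := by rw [hT]; exact Nat.lt_succ_self _
    have h := (Nat.div_lt_iff_lt_mul hq0).mp h0
    have h2 : (T + 1) * q = q * T + q := by ring
    linarith
  have hTr1 : (q : ℝ) * (T : ℝ) ≤ (A : ℝ) := by exact_mod_cast hTb1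
  have hTr2 : (A : ℝ) < (q : ℝ) * (T : ℝ) + (q : ℝ) := by exact_mod_cast hTb2
  set a' : Fin d → ℤ := fun j => a j - (T : ℤ) * c j with ha'
  have ha'le : ∀ j, |(a' j : ℝ)| ≤ (A : ℝ) / ((q : ℝ) * N) + 2 * (q : ℝ) := by
    intro j
    have heq : (a' j : ℝ) = (1 / (q : ℝ)) * ((q : ℝ) * (a j : ℝ) - (A : ℝ) * (c j : ℝ)) +
        ((A : ℝ) / (q : ℝ) - (T : ℝ)) * (c j : ℝ) := by
      rw [ha']; push_cast; field_simp; ring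
    have hfr1 : 0 ≤ (A : ℝ) / (q : ℝ) - (T : ℝ) := by
      rw [sub_nonneg, le_div_iff₀ hqr0]; linarith
    have hfr2 : (A : ℝ) / (q : ℝ) - (T : ℝ) ≤ 1 := by
      rw [sub_le_iff_le_add, div_le_iff₀ hqr0]; nlinarith
    rw [heq]
    calc |(1 / (q : ℝ)) * ((q : ℝ) * (a j : ℝ) - (A : ℝ) * (c j : ℝ)) +
        ((A : ℝ) / (q : ℝ) - (T : ℝ)) * (c j : ℝ)|
        ≤ |(1 / (q : ℝ)) * ((q : ℝ) * (a j : ℝ) - (A : ℝ) * (c j : ℝ))| +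
          |((A : ℝ) / (q : ℝ) - (T : ℝ)) * (c j : ℝ)| := abs_add_le _ _
      _ ≤ (1 / (q : ℝ)) * ((A : ℝ) / N) + 1 * (2 * (q : ℝ)) := by
          apply add_le_add
          · rw [abs_mul, abs_of_nonneg (by positivity : (0:ℝ) ≤ 1 / (q:ℝ)), abs_sub_comm]
            exact mul_le_mul_of_nonneg_left (hkey j) (by positivity)
          · rw [abs_mul, abs_of_nonneg hfr1]
            exact mul_le_mul hfr2 (hcle j) (abs_nonneg _) one_pos.le
      _ = (A : ℝ) / ((q : ℝ) * N) + 2 * (q : ℝ) := by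
          rw [one_mul]; congr 1; field_simp
  have ha'norm : ‖latt a'‖ ≤ dr * ((A : ℝ) / ((q : ℝ) * N) + 2 * (q : ℝ)) :=
    norm_latt_le hd1 a' _ ha'le
  refine ⟨c, a', (T : ℝ), hcnz, ?_, Nat.cast_nonneg T, ?_, ?_, ?_⟩
  · -- norm of c bounded by C₂ Λ^{d-1}
    calc ‖latt c‖ ≤ dr * (2 * (q : ℝ)) := hcnorm
      _ ≤ dr * (2 * (N : ℝ) ^ (d - 1)) := by
          apply mul_le_mul_of_nonneg_left _ hdpos.le
          linarith
      _ ≤ dr * (2 * (5 * dr ^ 2 * Λ) ^ (d - 1)) := by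
          apply mul_le_mul_of_nonneg_left _ hdpos.le
          have := pow_le_pow_left₀ hNr.le hNle (d - 1)
          linarith
      _ = 2 * dr * (5 * dr ^ 2) ^ (d - 1) * Λ ^ (d - 1) := by
          rw [mul_pow]; ring
  · -- the decomposition
    ext j
    show (a j : ℝ) = (latt a' + (T : ℝ) • latt c) j
    simp only [PiLp.add_apply, PiLp.smul_apply, latt, PiLp.toLp_apply, ha', smul_eq_mul]
    push_cast
    ring
  · -- the main inequality
    have step1 : Λ * (‖latt a'‖ + ‖latt c‖) * ‖latt c‖ ≤
        Λ * (dr * ((A : ℝ) / ((q : ℝ) * N) + 2 * (q : ℝ)) + dr * (2 * (q : ℝ))) *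
          (dr * (2 * (q : ℝ))) := by
      have hn1 : (0 : ℝ) ≤ ‖latt c‖ := norm_nonneg _
      have e1 : ‖latt a'‖ + ‖latt c‖ ≤
          dr * ((A : ℝ) / ((q : ℝ) * N) + 2 * (q : ℝ)) + dr * (2 * (q : ℝ)) :=
        add_le_add ha'norm hcnorm
      calc Λ * (‖latt a'‖ + ‖latt c‖) * ‖latt c‖
          ≤ Λ * (dr * ((A : ℝ) / ((q : ℝ) * N) + 2 * (q : ℝ)) + dr * (2 * (q : ℝ))) *
            ‖latt c‖ :=
            mul_le_mul_of_nonneg_right (mul_le_mul_of_nonneg_left e1 hΛ0.le) hn1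
        _ ≤ _ := by
            apply mul_le_mul_of_nonneg_left hcnorm
            positivity
    have step2 : Λ * (dr * ((A : ℝ) / ((q : ℝ) * N) + 2 * (q : ℝ)) + dr * (2 * (q : ℝ))) *
        (dr * (2 * (q : ℝ))) =
        Λ * (2 * dr ^ 2 * (A : ℝ) / N) + Λ * (8 * dr ^ 2 * (q : ℝ) ^ 2) := by
      field_simp
      ring
    have t1 : Λ * (2 * dr ^ 2 * (A : ℝ) / N) ≤ (A : ℝ) / 2 := by
      rw [show Λ * (2 * dr ^ 2 * (A : ℝ) / N) = (2 * dr ^ 2 * Λ * (A : ℝ)) / N by ring,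
        div_le_div_iff₀ hNr two_pos]
      nlinarith [mul_le_mul_of_nonneg_left hNge (by linarith : (0:ℝ) ≤ (A : ℝ))]
    have hq2 : (q : ℝ) ^ 2 ≤ (N : ℝ) ^ (2 * d - 2) := by
      have h1 : ((N : ℝ) ^ (d - 1)) ^ 2 = (N : ℝ) ^ (2 * d - 2) := by
        rw [← pow_mul]; congr 1; omega
      rw [← h1]
      exact pow_le_pow_left₀ (by positivity) hqNr 2
    have hNpow : (N : ℝ) ^ (2 * d - 2) ≤ (5 * dr ^ 2) ^ (2 * d - 2) * Λ ^ (2 * d - 2) := by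
      rw [← mul_pow]
      exact pow_le_pow_left₀ hNr.le hNle _
    have hΛpow : Λ * Λ ^ (2 * d - 2) = Λ ^ (2 * d - 1) := by
      rw [← pow_succ']; congr 1; omega
    have t2 : Λ * (8 * dr ^ 2 * (q : ℝ) ^ 2) ≤
        8 * dr ^ 2 * (5 * dr ^ 2) ^ (2 * d - 2) * Λ ^ (2 * d - 1) := by
      calc Λ * (8 * dr ^ 2 * (q : ℝ) ^ 2)
          ≤ Λ * (8 * dr ^ 2 * ((5 * dr ^ 2) ^ (2 * d - 2) * Λ ^ (2 * d - 2))) := by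
            apply mul_le_mul_of_nonneg_left _ hΛ0.le
            apply mul_le_mul_of_nonneg_left _ (by positivity : (0:ℝ) ≤ 8 * dr ^ 2)
            exact le_trans hq2 hNpow
        _ = 8 * dr ^ 2 * (5 * dr ^ 2) ^ (2 * d - 2) * (Λ * Λ ^ (2 * d - 2)) := by ring
        _ = 8 * dr ^ 2 * (5 * dr ^ 2) ^ (2 * d - 2) * Λ ^ (2 * d - 1) := by rw [hΛpow]
    have t3 : 8 * dr ^ 2 * (5 * dr ^ 2) ^ (2 * d - 2) * Λ ^ (2 * d - 1) ≤ ‖latt a‖ / 2 := by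
      linarith
    calc Λ * (‖latt a'‖ + ‖latt c‖) * ‖latt c‖ ≤ _ := step1
      _ = Λ * (2 * dr ^ 2 * (A : ℝ) / N) + Λ * (8 * dr ^ 2 * (q : ℝ) ^ 2) := step2
      _ ≤ (A : ℝ) / 2 + ‖latt a‖ / 2 := add_le_add t1 (le_trans t2 t3)
      _ ≤ ‖latt a‖ := by linarith
  · -- nonnegative inner product
    have hinner : (⟪latt a, latt c⟫ : ℝ) = ∑ j, (a j : ℝ) * (c j : ℝ) := by
      simp [PiLp.inner_apply, RCLike.inner_apply, latt, mul_comm]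
    rw [hinner]
    have per : ∀ j, (q : ℝ) * (a j : ℝ) ^ 2 - (A : ℝ) ^ 2 / N ≤
        (A : ℝ) * ((a j : ℝ) * (c j : ℝ)) := by
      intro j
      have he := hkey j
      have h1 : (A : ℝ) * ((a j : ℝ) * (c j : ℝ)) = (q : ℝ) * (a j : ℝ) ^ 2 +
          (a j : ℝ) * ((A : ℝ) * (c j : ℝ) - (q : ℝ) * (a j : ℝ)) := by ring
      have h2 : |(a j : ℝ) * ((A : ℝ) * (c j : ℝ) - (q : ℝ) * (a j : ℝ))| ≤
          (A : ℝ) * ((A : ℝ) / N) := by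
        rw [abs_mul]
        exact mul_le_mul (habs j) he (abs_nonneg _) (by positivity)
      have h3 := neg_abs_le ((a j : ℝ) * ((A : ℝ) * (c j : ℝ) - (q : ℝ) * (a j : ℝ)))
      have h4 : (A : ℝ) * ((A : ℝ) / N) = (A : ℝ) ^ 2 / N := by ring
      rw [h1]; linarith
    have hsum : ∑ j, ((q : ℝ) * (a j : ℝ) ^ 2 - (A : ℝ) ^ 2 / N) ≤
        (A : ℝ) * ∑ j, (a j : ℝ) * (c j : ℝ) := by
      rw [Finset.mul_sum]
      exact Finset.sum_le_sum fun j _ => per j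
    have hsum2 : ∑ j, ((q : ℝ) * (a j : ℝ) ^ 2 - (A : ℝ) ^ 2 / N) =
        (q : ℝ) * (∑ j, (a j : ℝ) ^ 2) - dr * ((A : ℝ) ^ 2 / N) := by
      rw [Finset.sum_sub_distrib, ← Finset.mul_sum, Finset.sum_const, Finset.card_univ,
        Fintype.card_fin, nsmul_eq_mul, hdrdef]
    have hsq : (A : ℝ) ^ 2 ≤ ∑ j, (a j : ℝ) ^ 2 := by
      have h1 : (A : ℝ) ^ 2 = (a i : ℝ) ^ 2 := by rw [hAabs, sq_abs]
      rw [h1]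
      exact Finset.single_le_sum (f := fun j => (a j : ℝ) ^ 2) (fun j _ => sq_nonneg _)
        (Finset.mem_univ i)
    have hNd : dr ≤ (N : ℝ) := by nlinarith
    have hdivle : dr * ((A : ℝ) ^ 2 / N) ≤ (A : ℝ) ^ 2 := by
      rw [show dr * ((A : ℝ) ^ 2 / N) = (dr * (A : ℝ) ^ 2) / N by ring, div_le_iff₀ hNr]
      nlinarith [sq_nonneg (A : ℝ)]
    have hq_sum : (A : ℝ) ^ 2 ≤ (q : ℝ) * ∑ j, (a j : ℝ) ^ 2 := by
      have hsumnn : 0 ≤ ∑ j, (a j : ℝ) ^ 2 := Finset.sum_nonneg fun j _ => sq_nonneg _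
      nlinarith
    have hfin : 0 ≤ (A : ℝ) * ∑ j, (a j : ℝ) * (c j : ℝ) := by linarith
    exact le_of_mul_le_mul_left (by simpa using hfin) (by linarith : (0:ℝ) < (A : ℝ))
end

section
/- Let d ≥ 2, let Δ ≥ 1 be an integer, and let a, b, c ∈ ℤ^d. If there exists an integer T such that a + tc ∼_Δ b + tc for every integer t ≥ T, then a + tc ∼_Δ b + tc for every integer t. -/
namespace Stmt13Aux

variable {d : ℕ}

/-- Integer bilinear form `⟨x, y⟩ = ∑ xᵢ yᵢ`. -/
def SZ (x y : Fin d → ℤ) : ℤ := ∑ i, x i * y i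

lemma SZ_self_nonneg (x : Fin d → ℤ) : 0 ≤ SZ x x :=
  Finset.sum_nonneg fun i _ => mul_self_nonneg _

lemma norm_latt (x : Fin d → ℤ) : ‖latt x‖ = Real.sqrt ((SZ x x : ℝ)) := by
  rw [EuclideanSpace.norm_eq]
  congr 1
  push_cast [SZ]
  refine Finset.sum_congr rfl fun i _ => ?_
  have h : (latt x) i = (x i : ℝ) := rfl
  rw [h, Real.norm_eq_abs, sq_abs]
  ring

lemma norm_eq_iff (x y : Fin d → ℤ) : ‖latt x‖ = ‖latt y‖ ↔ SZ x x = SZ y y := by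
  rw [norm_latt, norm_latt,
    Real.sqrt_inj (by exact_mod_cast SZ_self_nonneg x) (by exact_mod_cast SZ_self_nonneg y),
    Int.cast_inj]

lemma norm_le_iff (x : Fin d → ℤ) (Δ : ℕ) :
    ‖latt x‖ ≤ (Δ : ℝ) ↔ SZ x x ≤ (Δ : ℤ) ^ 2 := by
  rw [norm_latt, Real.sqrt_le_iff]
  constructor
  · rintro ⟨-, h⟩
    exact_mod_cast h
  · intro h
    exact ⟨by positivity, by exact_mod_cast h⟩

lemma preRel_iff (Δ : ℕ) (x y : Fin d → ℤ) :
    preRel Δ x y ↔ SZ x x = SZ y y ∧ SZ (x - y) (x - y) ≤ (Δ : ℤ) ^ 2 := by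
  unfold preRel
  rw [norm_eq_iff, norm_le_iff]

lemma SZ_shift (p c : Fin d → ℤ) (t : ℤ) :
    SZ (p + t • c) (p + t • c) = SZ p p + 2 * t * SZ p c + t ^ 2 * SZ c c := by
  unfold SZ
  rw [Finset.mul_sum, Finset.mul_sum, ← Finset.sum_add_distrib, ← Finset.sum_add_distrib]
  refine Finset.sum_congr rfl fun i _ => ?_
  simp only [Pi.add_apply, Pi.smul_apply, smul_eq_mul]
  ring

lemma SZ_sub_self (u w : Fin d → ℤ) :
    SZ (u - w) (u - w) = SZ u u - 2 * SZ u w + SZ w w := by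
  unfold SZ
  rw [Finset.mul_sum, ← Finset.sum_sub_distrib, ← Finset.sum_add_distrib]
  refine Finset.sum_congr rfl fun i _ => ?_
  simp only [Pi.sub_apply]
  ring

lemma SZ_cs (x y : Fin d → ℤ) : (SZ x y) ^ 2 ≤ SZ x x * SZ y y := by
  have h := Finset.sum_mul_sq_le_sq_mul_sq Finset.univ x y
  have hx : ∑ i, x i ^ 2 = SZ x x := by unfold SZ; exact Finset.sum_congr rfl fun i _ => sq (x i) ▸ by ring
  have hy : ∑ i, y i ^ 2 = SZ y y := by unfold SZ; exact Finset.sum_congr rfl fun i _ => sq (y i) ▸ by ring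
  rw [hx, hy] at h
  exact h

lemma key_bound {x y : Fin d → ℤ} {A B : ℤ} (hx : SZ x x = A) (hyB : SZ y y ≤ B ^ 2)
    (hB : 0 ≤ B) : |SZ x y| ≤ A * B := by
  have hA : 0 ≤ A := hx ▸ SZ_self_nonneg x
  have hcs : (SZ x y) ^ 2 ≤ A * B ^ 2 := by
    calc (SZ x y) ^ 2 ≤ SZ x x * SZ y y := SZ_cs x y
    _ ≤ A * B ^ 2 := by rw [hx]; exact mul_le_mul_of_nonneg_left hyB hA
  rcases eq_or_lt_of_le hA with h0 | h1
  · have h2 : (SZ x y) ^ 2 ≤ 0 := by rw [← h0] at hcs; simpa using hcs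
    have h3 : SZ x y = 0 := by nlinarith [sq_nonneg (SZ x y)]
    rw [h3, ← h0]
    simp
  · have h1' : 1 ≤ A := h1
    have h2 : A * B ^ 2 ≤ (A * B) ^ 2 := by
      nlinarith [mul_nonneg (mul_nonneg hA (sub_nonneg.mpr h1')) (sq_nonneg B)]
    have h3 : (SZ x y) ^ 2 ≤ (A * B) ^ 2 := le_trans hcs h2
    have hAB : 0 ≤ A * B := mul_nonneg hA hB
    rw [abs_le]
    constructor <;> nlinarith [sq_nonneg (SZ x y + A * B), sq_nonneg (SZ x y - A * B)]

lemma preRel_symm (Δ : ℕ) : Symmetric (preRel (d := d) Δ) := by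
  intro x y hxy
  rw [preRel_iff] at hxy ⊢
  refine ⟨hxy.1.symm, ?_⟩
  have h : y - x = -(x - y) := by abel
  rw [h]
  have h2 : SZ (-(x - y)) (-(x - y)) = SZ (x - y) (x - y) := by
    unfold SZ
    refine Finset.sum_congr rfl fun i _ => ?_
    simp only [Pi.neg_apply]
    ring
  rw [h2]
  exact hxy.2

lemma rtg_symm {α : Type*} {r : α → α → Prop} (hs : Symmetric r) {x y : α}
    (h : Relation.ReflTransGen r x y) : Relation.ReflTransGen r y x := by
  induction h with
  | refl => exact .refl
  | tail _ hbc ih => exact (Relation.ReflTransGen.single (hs hbc)).trans ih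

lemma rtg_of_eqvGen {α : Type*} {r : α → α → Prop} (hs : Symmetric r) {x y : α}
    (h : Relation.EqvGen r x y) : Relation.ReflTransGen r x y := by
  induction h with
  | rel _ _ h => exact Relation.ReflTransGen.single h
  | refl _ => exact .refl
  | symm _ _ _ ih => exact rtg_symm hs ih
  | trans _ _ _ _ _ ih1 ih2 => exact ih1.trans ih2

end Stmt13Aux

open Stmt13Aux in
/-- Proposition 4.4(i): if `[a + tc]_Δ = [b + tc]_Δ` for all sufficiently large
integers `t`, then `[a + tc]_Δ = [b + tc]_Δ` for all integers `t`. -/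
theorem stmt_13 {d : ℕ} (hd : 2 ≤ d) (Δ : ℕ) (hΔ : 1 ≤ Δ) (a b c : Fin d → ℤ)
    (h : ∃ T : ℤ, ∀ t : ℤ, T ≤ t →
      Relation.EqvGen (preRel Δ) (a + t • c) (b + t • c)) :
    ∀ t : ℤ, Relation.EqvGen (preRel Δ) (a + t • c) (b + t • c) := by
  intro t₀
  obtain ⟨T, hT⟩ := h
  set D : ℤ := (Δ : ℤ) with hD
  have hD1 : 1 ≤ D := by rw [hD]; exact_mod_cast hΔ
  set A : ℤ := SZ a a with hA
  have hA0 : 0 ≤ A := SZ_self_nonneg a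
  set t₁ : ℤ := max T (A * D + D * D + 1) with ht₁def
  have ht₁T : T ≤ t₁ := le_max_left _ _
  have ht₁big : A * D + D * D + 1 ≤ t₁ := le_max_right _ _
  have hAD : 0 ≤ A * D := mul_nonneg hA0 (by linarith)
  have hDD : (1 : ℤ) ≤ D * D := by
    have := mul_le_mul hD1 hD1 zero_le_one (by linarith : (0:ℤ) ≤ D)
    linarith
  have hDDsq : D * D = D ^ 2 := (sq D).symm
  have ht₁0 : 0 ≤ t₁ := by linarith
  have hchain : Relation.ReflTransGen (preRel Δ) (a + t₁ • c) (b + t₁ • c) :=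
    rtg_of_eqvGen (preRel_symm Δ) (hT t₁ ht₁T)
  have key : ∀ x : Fin d → ℤ, Relation.ReflTransGen (preRel Δ) (a + t₁ • c) x →
      SZ (x - t₁ • c) (x - t₁ • c) = A ∧ SZ (x - t₁ • c) c = SZ a c ∧
      Relation.EqvGen (preRel Δ) (a + t₀ • c) ((x - t₁ • c) + t₀ • c) := by
    intro x hx
    induction hx with
    | refl =>
      rw [add_sub_cancel_right]
      exact ⟨rfl, rfl, Relation.EqvGen.refl _⟩
    | @tail x y hax hxy ih =>
      obtain ⟨ihu, ihc, ihe⟩ := ih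
      rw [preRel_iff] at hxy
      obtain ⟨hnorm, hdiff⟩ := hxy
      set u : Fin d → ℤ := x - t₁ • c with hu
      set v : Fin d → ℤ := y - t₁ • c with hv
      set w : Fin d → ℤ := x - y with hw
      have hxu : x = u + t₁ • c := by rw [hu]; abel
      have hyv : y = v + t₁ • c := by rw [hv]; abel
      have hvuw : v = u - w := by rw [hv, hu, hw]; abel
      -- expand the norm equality
      rw [hxu, hyv, SZ_shift, SZ_shift] at hnorm
      have hwb : SZ w w ≤ D ^ 2 := hdiff
      have hww0 : 0 ≤ SZ w w := SZ_self_nonneg w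
      have huw : |SZ u w| ≤ A * D := key_bound ihu hwb (by linarith)
      have hvv : SZ v v = A - 2 * SZ u w + SZ w w := by rw [hvuw, SZ_sub_self, ihu]
      -- k measures the defect in the linear invariant
      set k : ℤ := SZ v c - SZ a c with hk
      have hE : 2 * t₁ * k = 2 * SZ u w - SZ w w := by
        have := hnorm
        rw [ihu, ihc, hvv] at this
        have hvc : SZ v c = SZ a c + k := by rw [hk]; ring
        rw [hvc] at this
        linarith [this]
      have hk0 : k = 0 := by
        have habs := abs_le.mp huw
        by_contra hne
        rcases lt_or_gt_of_ne hne with hneg | hpos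
        · have hk1 : k ≤ -1 := by omega
          have hm : 2 * t₁ * k ≤ 2 * t₁ * (-1) :=
            mul_le_mul_of_nonneg_left hk1 (by linarith)
          linarith [habs.1, habs.2]
        · have hk1 : 1 ≤ k := hpos
          have hm : 2 * t₁ * 1 ≤ 2 * t₁ * k :=
            mul_le_mul_of_nonneg_left hk1 (by linarith)
          linarith [habs.1, habs.2]
      have hvc : SZ v c = SZ a c := by rw [hk] at hk0; linarith
      have hvv' : SZ v v = A := by
        rw [hk0] at hE
        rw [hvv]
        linarith
      refine ⟨hvv', hvc, ?_⟩
      refine Relation.EqvGen.trans _ _ _ ihe (Relation.EqvGen.rel _ _ ?_)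
      rw [preRel_iff]
      constructor
      · rw [SZ_shift, SZ_shift, ihu, ihc, hvv', hvc]
      · have hsub : (u + t₀ • c) - (v + t₀ • c) = w := by rw [hvuw]; abel
        rw [hsub]
        exact hwb
  obtain ⟨-, -, hfin⟩ := key _ hchain
  rw [add_sub_cancel_right] at hfin
  exact hfin
end

section
/- Let d ≥ 2, let Δ ≥ 1 be an integer, and let D ≥ 2 be a real number such that |x − y| ≤ D whenever x ∼_Δ y. Let a, a', c ∈ ℤ^d with c ≠ 0, and suppose there is a real τ ≥ 0 with a = a' + τc and |a| ≥ D²(|a'| + |c|)|c|. Then for every b ∈ ℤ^d with b ∼_Δ a one has ⟨b − a, c⟩ = 0, and moreover b + tc ∼_Δ a + tc for every integer t. In particular [a + tc]_Δ = [a]_Δ + tc for every integer t ≥ 0. -/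
open scoped RealInnerProductSpace

lemma latt_apply {d : ℕ} (a : Fin d → ℤ) (i : Fin d) : latt a i = (a i : ℝ) := rfl

lemma latt_add {d : ℕ} (a b : Fin d → ℤ) : latt (a + b) = latt a + latt b := by
  ext i
  simp [latt, Pi.add_apply]

lemma latt_sub {d : ℕ} (a b : Fin d → ℤ) : latt (a - b) = latt a - latt b := by
  ext i
  simp [latt, Pi.sub_apply]

lemma latt_zsmul {d : ℕ} (t : ℤ) (c : Fin d → ℤ) : latt (t • c) = (t : ℝ) • latt c := by
  ext i
  simp [latt, Pi.smul_apply]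

lemma inner_latt {d : ℕ} (u v : Fin d → ℤ) :
    (⟪latt u, latt v⟫ : ℝ) = ((∑ i, u i * v i : ℤ) : ℝ) := by
  rw [PiLp.inner_apply]
  push_cast
  simp [latt, RCLike.inner_apply, mul_comm]

lemma norm_eqv {d : ℕ} {Δ : ℕ} {x y : Fin d → ℤ}
    (h : Relation.EqvGen (preRel Δ) x y) : ‖latt x‖ = ‖latt y‖ := by
  induction h with
  | rel _ _ h => exact h.1
  | refl => rfl
  | symm _ _ _ ih => exact ih.symm
  | trans _ _ _ _ _ ih1 ih2 => exact ih1.trans ih2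

set_option maxHeartbeats 1600000 in
/-- Proposition 4.4(ii): let `D ≥ 2` bound all block diameters of `∼_Δ`.
If `a = a' + τc` with `τ ≥ 0` and `|a| ≥ D²(|a'|+|c|)|c|`, then every `b ∼_Δ a`
satisfies `⟨b − a, c⟩ = 0` and `b + tc ∼_Δ a + tc` for every integer `t`;
in particular `[a + tc]_Δ = [a]_Δ + tc` for `t ≥ 0`. -/
theorem stmt_14 {d : ℕ} (hd : 2 ≤ d) (Δ : ℕ) (hΔ : 1 ≤ Δ)
    (D : ℝ) (hD : 2 ≤ D)
    (hdiam : ∀ x y : Fin d → ℤ, Relation.EqvGen (preRel Δ) x y →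
      ‖latt (x - y)‖ ≤ D)
    (a a' c : Fin d → ℤ) (hc : c ≠ 0)
    (τ : ℝ) (hτ : 0 ≤ τ) (ha : latt a = latt a' + τ • latt c)
    (hbig : D ^ 2 * (‖latt a'‖ + ‖latt c‖) * ‖latt c‖ ≤ ‖latt a‖)
    (b : Fin d → ℤ) (hb : Relation.EqvGen (preRel Δ) b a) :
    (⟪latt (b - a), latt c⟫ : ℝ) = 0 ∧
    ∀ t : ℤ, Relation.EqvGen (preRel Δ) (b + t • c) (a + t • c) := by
  have hC : (1 : ℝ) ≤ ‖latt c‖ := one_le_norm_latt hc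
  have hA : (0 : ℝ) ≤ ‖latt a'‖ := norm_nonneg _
  -- Key lemma: any x equivalent to a has ⟪latt (x - a), latt c⟫ = 0.
  have key : ∀ x : Fin d → ℤ, Relation.EqvGen (preRel Δ) x a →
      (⟪latt (x - a), latt c⟫ : ℝ) = 0 := by
    intro x hx
    have hnorm : ‖latt x‖ = ‖latt a‖ := norm_eqv hx
    have hdist : ‖latt (x - a)‖ ≤ D := hdiam x a hx
    set u : EuclideanSpace ℝ (Fin d) := latt x - latt a with hu
    have hux : latt (x - a) = u := latt_sub x a
    have hxu : latt x = latt a + u := by rw [hu]; abel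
    -- norm equation
    have hsq : ‖latt a‖ ^ 2 + 2 * ⟪latt a, u⟫ + ‖u‖ ^ 2 = ‖latt a‖ ^ 2 := by
      rw [← norm_add_sq_real, ← hxu, hnorm]
    have hinner_a : (2 : ℝ) * ⟪latt a, u⟫ + ‖u‖ ^ 2 = 0 := by linarith
    -- decompose inner product using ha
    have hdecomp : (⟪latt a, u⟫ : ℝ) = ⟪latt a', u⟫ + τ * ⟪latt c, u⟫ := by
      rw [ha, inner_add_left, real_inner_smul_left]
    set I : ℝ := ⟪latt c, u⟫ with hI
    -- I is an integer
    have hint : ∃ n : ℤ, I = (n : ℝ) := by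
      refine ⟨∑ i, c i * (x - a) i, ?_⟩
      rw [hI, ← hux, inner_latt]
    by_contra hne
    have hne' : I ≠ 0 := by
      intro h0
      apply hne
      rw [hux, real_inner_comm]
      exact h0
    obtain ⟨n, hn⟩ := hint
    have h1I : (1 : ℝ) ≤ |I| := by
      rw [hn]
      have : n ≠ 0 := by rintro rfl; simp at hn; exact hne' hn
      exact_mod_cast Int.one_le_abs this
    have hbound : |⟪latt a', u⟫| ≤ ‖latt a'‖ * D := by
      calc |⟪latt a', u⟫| ≤ ‖latt a'‖ * ‖u‖ := abs_real_inner_le_norm _ _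
        _ ≤ ‖latt a'‖ * D := by
            apply mul_le_mul_of_nonneg_left _ hA
            rw [← hux]; exact hdist
    have huD : ‖u‖ ≤ D := by rw [← hux]; exact hdist
    have hu0 : (0 : ℝ) ≤ ‖u‖ := norm_nonneg _
    -- τ * I = -(‖u‖^2 / 2) - ⟪latt a', u⟫
    have hτI : τ * I = -(‖u‖ ^ 2 / 2) - ⟪latt a', u⟫ := by
      rw [hdecomp] at hinner_a; linarith
    have habs : |τ * I| ≤ D ^ 2 / 2 + ‖latt a'‖ * D := by
      rw [hτI]
      have h2 : ‖u‖ ^ 2 ≤ D ^ 2 := by nlinarith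
      calc |-(‖u‖ ^ 2 / 2) - ⟪latt a', u⟫| ≤ |(-(‖u‖ ^ 2 / 2))| + |⟪latt a', u⟫| :=
            abs_sub _ _
        _ ≤ D ^ 2 / 2 + ‖latt a'‖ * D := by
            rw [abs_neg, abs_of_nonneg (by positivity)]
            linarith
    have hτle : τ ≤ D ^ 2 / 2 + ‖latt a'‖ * D := by
      have : τ * 1 ≤ τ * |I| := by
        apply mul_le_mul_of_nonneg_left h1I hτ
      have h3 : τ * |I| = |τ * I| := by
        rw [abs_mul, abs_of_nonneg hτ]
      linarith [habs, this, h3.symm.le]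
    have hna : ‖latt a‖ ≤ ‖latt a'‖ + τ * ‖latt c‖ := by
      rw [ha]
      calc ‖latt a' + τ • latt c‖ ≤ ‖latt a'‖ + ‖τ • latt c‖ := norm_add_le _ _
        _ = ‖latt a'‖ + τ * ‖latt c‖ := by
            rw [norm_smul, Real.norm_eq_abs, abs_of_nonneg hτ]
    have hC0 : (0 : ℝ) ≤ ‖latt c‖ := le_trans zero_le_one hC
    have eD : (2 : ℝ) ≤ D * (D - 1) := by nlinarith [sq_nonneg (D - 2)]
    have eDD : (0 : ℝ) ≤ D * (D - 1) := by linarith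
    have e1 : (2 : ℝ) ≤ D * ‖latt c‖ * (D - 1) := by
      nlinarith [mul_le_mul_of_nonneg_left hC eDD]
    have e4 : (4 : ℝ) ≤ D ^ 2 := by nlinarith
    have eC : (1 / 2 : ℝ) ≤ ‖latt c‖ * (‖latt c‖ - 1 / 2) := by nlinarith [sq_nonneg (‖latt c‖ - 1)]
    have e2 : (2 : ℝ) ≤ D ^ 2 * ‖latt c‖ * (‖latt c‖ - 1 / 2) := by
      nlinarith [mul_le_mul e4 eC (by norm_num) (sq_nonneg D)]
    nlinarith [hbig, hna, mul_le_mul_of_nonneg_right hτle hC0,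
      mul_le_mul_of_nonneg_left e1 hA, e2, hA, hC, hD]
  have hinner_b : (⟪latt (b - a), latt c⟫ : ℝ) = 0 := key b hb
  refine ⟨hinner_b, ?_⟩
  -- step translation
  have step : ∀ x y : Fin d → ℤ, preRel Δ x y →
      (⟪latt (x - a), latt c⟫ : ℝ) = 0 → (⟪latt (y - a), latt c⟫ : ℝ) = 0 →
      ∀ t : ℤ, preRel Δ (x + t • c) (y + t • c) := by
    intro x y hxy hx0 hy0 t
    constructor
    · have hx : latt (x + t • c) = latt x + (t : ℝ) • latt c := by
        rw [latt_add, latt_zsmul]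
      have hy : latt (y + t • c) = latt y + (t : ℝ) • latt c := by
        rw [latt_add, latt_zsmul]
      have hix : (⟪latt x, latt c⟫ : ℝ) = ⟪latt a, latt c⟫ := by
        have := hx0
        rw [latt_sub, inner_sub_left] at this
        linarith
      have hiy : (⟪latt y, latt c⟫ : ℝ) = ⟪latt a, latt c⟫ := by
        have := hy0
        rw [latt_sub, inner_sub_left] at this
        linarith
      have hsx : ‖latt (x + t • c)‖ ^ 2 = ‖latt x‖ ^ 2 +
          2 * ((t : ℝ) * ⟪latt a, latt c⟫) + (t : ℝ) ^ 2 * ‖latt c‖ ^ 2 := by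
        rw [hx, norm_add_sq_real, real_inner_smul_right, hix, norm_smul,
          Real.norm_eq_abs, mul_pow, sq_abs]
      have hsy : ‖latt (y + t • c)‖ ^ 2 = ‖latt y‖ ^ 2 +
          2 * ((t : ℝ) * ⟪latt a, latt c⟫) + (t : ℝ) ^ 2 * ‖latt c‖ ^ 2 := by
        rw [hy, norm_add_sq_real, real_inner_smul_right, hiy, norm_smul,
          Real.norm_eq_abs, mul_pow, sq_abs]
      have hsq : ‖latt (x + t • c)‖ ^ 2 = ‖latt (y + t • c)‖ ^ 2 := by
        rw [hsx, hsy, hxy.1]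
      have := congrArg Real.sqrt hsq
      rwa [Real.sqrt_sq (norm_nonneg _), Real.sqrt_sq (norm_nonneg _)] at this
    · have : (x + t • c) - (y + t • c) = x - y := by abel
      rw [this]
      exact hxy.2
  -- translation of the whole chain
  have main : ∀ x y : Fin d → ℤ, Relation.EqvGen (preRel Δ) x y →
      Relation.EqvGen (preRel Δ) y a →
      ∀ t : ℤ, Relation.EqvGen (preRel Δ) (x + t • c) (y + t • c) := by
    intro x y hxy
    induction hxy with
    | rel p q h =>
        intro hqa t
        have hpa : Relation.EqvGen (preRel Δ) p a :=
          Relation.EqvGen.trans _ _ _ (Relation.EqvGen.rel _ _ h) hqa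
        exact Relation.EqvGen.rel _ _ (step p q h (key p hpa) (key q hqa) t)
    | refl p => intro _ t; exact Relation.EqvGen.refl _
    | symm p q h ih =>
        intro hpa t
        have hqa : Relation.EqvGen (preRel Δ) q a :=
          Relation.EqvGen.trans _ _ _ (Relation.EqvGen.symm _ _ h) hpa
        exact Relation.EqvGen.symm _ _ (ih hqa t)
    | trans p q r hpq hqr ih1 ih2 =>
        intro hra t
        have hqa : Relation.EqvGen (preRel Δ) q a :=
          Relation.EqvGen.trans _ _ _ hqr hra
        exact Relation.EqvGen.trans _ _ _ (ih1 hqa t) (ih2 hra t)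
  intro t
  exact main b a hb (Relation.EqvGen.refl a) t
end
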